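/- Every simple graph with n vertices and maximum degree 3 has at most O(2^{3n/8}) Hamiltonian cycles; more precisely, there is a constant c such that for all n, any simple n-vertex graph of maximum degree 3 has at most c·2^{3n/8} Hamiltonian cycles. -/

import Mathlib

set_option linter.unusedSectionVars false
set_option maxHeartbeats 1000000

/-- `IsHamCycleSet G C` : `C` is the edge set of some Hamiltonian cycle of `G`. -/
def IsHamCycleSet {V : Type*} [DecidableEq V] (G : SimpleGraph V) (C : Set (Sym2 V)) : Prop :=
  ∃ (v : V) (p : G.Walk v v), p.IsHamiltonianCycle ∧ C = {e | e ∈ p.edges}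


namespace HamAux

open SimpleGraph Walk Finset
variable {V : Type*} [Fintype V] [DecidableEq V] (G : SimpleGraph V)

noncomputable def EF : Finset (Sym2 V) := G.edgeSet.toFinite.toFinset
lemma mem_EF {e : Sym2 V} : e ∈ EF G ↔ e ∈ G.edgeSet := Set.Finite.mem_toFinset _
noncomputable def incE (v : V) : Finset (Sym2 V) := (EF G).filter (v ∈ ·)
lemma mem_incE {v : V} {e : Sym2 V} : e ∈ incE G v ↔ e ∈ G.edgeSet ∧ v ∈ e := by
  simp [incE, mem_EF, and_comm]

/-- C is (the Finset of edges of) a Hamiltonian cycle -/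
def HamC (C : Finset (Sym2 V)) : Prop := IsHamCycleSet G (↑C : Set (Sym2 V))

/-- counted predicate -/
def Ok (F X C : Finset (Sym2 V)) : Prop := HamC G C ∧ F ⊆ C ∧ Disjoint C X

/-- the count -/
noncomputable def NC (F X : Finset (Sym2 V)) : ℕ := {C : Finset (Sym2 V) | Ok G F X C}.ncard

variable {G}

section count
variable {F X F₁ X₁ F₂ X₂ : Finset (Sym2 V)}

lemma NC_mono (h : ∀ C, Ok G F X C → Ok G F₁ X₁ C) : NC G F X ≤ NC G F₁ X₁ :=
  Set.ncard_le_ncard (fun C hC => h C hC) (Set.toFinite _)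

lemma NC_branch (e : Sym2 V)
    (h1 : ∀ C, Ok G F X C → e ∈ C → Ok G F₁ X₁ C)
    (h2 : ∀ C, Ok G F X C → e ∉ C → Ok G F₂ X₂ C) :
    NC G F X ≤ NC G F₁ X₁ + NC G F₂ X₂ := by
  have hsub : {C : Finset (Sym2 V) | Ok G F X C}
      ⊆ {C | Ok G F₁ X₁ C} ∪ {C | Ok G F₂ X₂ C} := by
    intro C hC
    by_cases he : e ∈ C
    · exact Or.inl (h1 C hC he)
    · exact Or.inr (h2 C hC he)
  calc NC G F X ≤ ({C | Ok G F₁ X₁ C} ∪ {C | Ok G F₂ X₂ C} : Set _).ncard :=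
        Set.ncard_le_ncard hsub (Set.toFinite _)
    _ ≤ NC G F₁ X₁ + NC G F₂ X₂ := Set.ncard_union_le _ _

lemma NC_zero (h : ∀ C, ¬ Ok G F X C) : NC G F X = 0 := by
  have : {C : Finset (Sym2 V) | Ok G F X C} = ∅ := by
    ext C; simp [h C]
  simp [NC, this]

lemma NC_le_one (h : ∀ C₁ C₂, Ok G F X C₁ → Ok G F X C₂ → C₁ = C₂) : NC G F X ≤ 1 := by
  rw [NC, Set.ncard_le_one_iff_eq]
  by_cases hne : {C : Finset (Sym2 V) | Ok G F X C}.Nonempty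
  · obtain ⟨C, hC⟩ := hne
    right
    exact ⟨C, Set.eq_singleton_iff_unique_mem.mpr ⟨hC, fun C' hC' => h C' C hC' hC⟩⟩
  · left; exact Set.not_nonempty_iff_eq_empty.mp hne
end count


lemma incE_subset_EF {v : V} : incE G v ⊆ EF G := Finset.filter_subset _ _


lemma filter_eq_nil_of_not_mem_support {x y : V} (w : G.Walk x y) {v : V}
    (hv : v ∉ w.support) : (w.edges.filter (fun e => v ∈ e)) = [] := by
  rw [List.filter_eq_nil_iff]
  intro e he hve
  induction e with
  | h a b =>
    simp only [decide_eq_true_eq, Sym2.mem_iff] at hve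
    rcases hve with rfl | rfl
    · exact hv (w.fst_mem_support_of_mem_edges he)
    · exact hv (w.snd_mem_support_of_mem_edges he)

lemma path_filter_count {x y : V} (w : G.Walk x y) (hw : w.IsPath) (hxy : x ≠ y) :
    ∀ v ∈ w.support, (w.edges.filter (fun e => v ∈ e)).length
      = if v = x ∨ v = y then 1 else 2 := by
  induction w with
  | nil => exact absurd rfl hxy
  | @cons a b c h r ih =>
    intro v hv
    rw [Walk.cons_isPath_iff] at hw
    obtain ⟨hr, har⟩ := hw
    simp only [Walk.support_cons, List.mem_cons] at hv
    simp only [Walk.edges_cons, List.filter_cons]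
    by_cases hva : v = a
    · subst hva
      rw [filter_eq_nil_of_not_mem_support r har]
      have h1 : decide (v ∈ s(v, b)) = true := by simp
      rw [h1, if_pos rfl]
      simp [hxy]
    · have hvr : v ∈ r.support := hv.resolve_left hva
      cases r with
      | nil =>
        simp only [Walk.support_nil, List.mem_singleton] at hvr
        subst hvr
        have h1 : decide (v ∈ s(a, v)) = true := by simp
        rw [h1, if_pos rfl]
        simp [hva]
      | @cons b' d c' h' r' =>
        have hbc : b ≠ c := by
          intro hbc
          subst hbc
          have h2 := (Walk.cons_isPath_iff h' r').mp hr
          exact h2.2 r'.end_mem_support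
        have ihr := ih hr hbc v hvr
        by_cases hvb : v = b
        · subst hvb
          have h1 : decide (v ∈ s(a, v)) = true := by simp
          rw [h1, if_pos rfl]
          rw [List.length_cons]
          rw [ihr]
          have hvc : v ≠ c := hbc
          simp [hvc, hva]
        · have h1 : decide (v ∈ s(a, b)) = false := by simp [hva, hvb]
          rw [h1]
          simp only [Bool.false_eq_true, if_false]
          rw [ihr]
          simp [hva, hvb]

lemma cycle_filter_count {u : V} (p : G.Walk u u) (hp : p.IsCycle) {v : V}
    (hv : v ∈ p.support) : (p.edges.filter (fun e => v ∈ e)).length = 2 := by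
  have hrot := p.rotate_edges v hv
  have hperm : ((p.rotate v hv).edges.filter (fun e => v ∈ e)).length
      = (p.edges.filter (fun e => v ∈ e)).length :=
    (hrot.perm.filter _).length_eq
  rw [← hperm]
  have hq : (p.rotate v hv).IsCycle := hp.rotate hv
  generalize hqq : p.rotate v hv = q at hq ⊢
  clear hqq hrot hperm hv hp p
  obtain ⟨b, h, r, rfl⟩ : ∃ b, ∃ h : G.Adj v b, ∃ r : G.Walk b v, q = Walk.cons h r := by
    cases q with
    | nil => exact absurd hq (Walk.IsCycle.not_of_nil)
    | cons h r => exact ⟨_, h, r, rfl⟩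
  rw [Walk.cons_isCycle_iff] at hq
  have hbv : b ≠ v := fun h' => (G.ne_of_adj h) h'.symm
  have hpath := path_filter_count r hq.1 hbv v r.end_mem_support
  simp only [Walk.edges_cons, List.filter_cons]
  have h1 : decide (v ∈ s(v, b)) = true := by simp
  rw [h1, if_pos rfl]
  rw [List.length_cons, hpath]
  simp


/-- Part 2 key lemmas -/
lemma ham_sub {C : Finset (Sym2 V)} (h : HamC G C) : C ⊆ EF G := by
  obtain ⟨v, p, hp, hC⟩ := h
  intro e he
  rw [mem_EF]
  have : e ∈ (↑C : Set (Sym2 V)) := he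
  rw [hC] at this
  exact p.edges_subset_edgeSet this

lemma ham_two {C : Finset (Sym2 V)} (h : HamC G C) (v : V) :
    (C ∩ incE G v).card = 2 := by
  obtain ⟨u, p, hp, hC⟩ := h
  have hCfin : C = p.edges.toFinset := by
    apply Finset.coe_injective
    rw [hC]
    ext e
    simp
  subst hCfin
  have hsub : p.edges.toFinset ∩ incE G v = p.edges.toFinset.filter (fun e => v ∈ e) := by
    ext e
    simp only [Finset.mem_inter, Finset.mem_filter, mem_incE, List.mem_toFinset]
    constructor
    · rintro ⟨he, _, hv⟩; exact ⟨he, hv⟩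
    · rintro ⟨he, hv⟩
      refine ⟨he, ?_, hv⟩
      exact p.edges_subset_edgeSet (by simpa using he)
  rw [hsub]
  have hft : p.edges.toFinset.filter (fun e => v ∈ e)
      = (p.edges.filter (fun e => v ∈ e)).toFinset := by
    ext e; simp
  rw [hft, List.card_toFinset, List.Nodup.dedup (hp.isCycle.edges_nodup.filter _)]
  exact cycle_filter_count p hp.isCycle (hp.mem_support v)

-- standalone abstract versions (I : the incident-edge finset at a vertex; C : with (C ∩ I).card = 2)
section twologic
variable {C I : Finset (Sym2 V)} {d1 d2 d3 : Sym2 V}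

/-- from two present incident edges, exclude a third -/
lemma H1 (h2 : (C ∩ I).card = 2) (hd1 : d1 ∈ C) (hd2 : d2 ∈ C) (hne : d1 ≠ d2)
    (hi1 : d1 ∈ I) (hi2 : d2 ∈ I) (hi3 : d3 ∈ I) (h31 : d3 ≠ d1) (h32 : d3 ≠ d2) :
    d3 ∉ C := by
  intro hd3
  have hsub : ({d1, d2} : Finset (Sym2 V)) ⊆ C ∩ I := by
    intro e he
    rcases Finset.mem_insert.mp he with rfl | he
    · exact Finset.mem_inter.mpr ⟨hd1, hi1⟩
    · rw [Finset.mem_singleton] at he; subst he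
      exact Finset.mem_inter.mpr ⟨hd2, hi2⟩
  have hcard : ({d1, d2} : Finset (Sym2 V)).card = 2 := by
    rw [Finset.card_insert_of_notMem (by simpa using hne), Finset.card_singleton]
  have heq : ({d1, d2} : Finset (Sym2 V)) = C ∩ I :=
    Finset.eq_of_subset_of_card_le hsub (by rw [hcard, h2])
  have : d3 ∈ ({d1, d2} : Finset (Sym2 V)) := heq ▸ Finset.mem_inter.mpr ⟨hd3, hi3⟩
  simp only [Finset.mem_insert, Finset.mem_singleton] at this
  rcases this with h | h
  · exact h31 h
  · exact h32 h

/-- from one absent incident edge (of ≤ 3), force the other two -/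
lemma H2 (h2 : (C ∩ I).card = 2) (hI : I ⊆ {d1, d2, d3}) (hd1 : d1 ∉ C)
    (hne : d2 ≠ d3) : d2 ∈ C ∧ d3 ∈ C := by
  have hsub : C ∩ I ⊆ {d2, d3} := by
    intro e he
    have heI := Finset.mem_inter.mp he
    have := hI heI.2
    simp only [Finset.mem_insert, Finset.mem_singleton] at this ⊢
    rcases this with rfl | h
    · exact absurd heI.1 hd1
    · exact h
  have hcard2 : ({d2, d3} : Finset (Sym2 V)).card = 2 := by
    rw [Finset.card_insert_of_notMem (by simpa using hne), Finset.card_singleton]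
  have heq : C ∩ I = {d2, d3} := Finset.eq_of_subset_of_card_le hsub (by rw [hcard2, h2])
  constructor
  · have : d2 ∈ C ∩ I := heq ▸ (by simp : d2 ∈ ({d2, d3} : Finset (Sym2 V)))
    exact (Finset.mem_inter.mp this).1
  · have : d3 ∈ C ∩ I := heq ▸ (by simp : d3 ∈ ({d2, d3} : Finset (Sym2 V)))
    exact (Finset.mem_inter.mp this).1

/-- two absent incident edges (of ≤ 3) is absurd -/
lemma H0 (h2 : (C ∩ I).card = 2) (hI : I ⊆ {d1, d2, d3}) (hd1 : d1 ∉ C)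
    (hd2 : d2 ∉ C) : False := by
  have hsub : C ∩ I ⊆ {d3} := by
    intro e he
    have heI := Finset.mem_inter.mp he
    have := hI heI.2
    simp only [Finset.mem_insert, Finset.mem_singleton] at this ⊢
    rcases this with rfl | rfl | h
    · exact absurd heI.1 hd1
    · exact absurd heI.1 hd2
    · exact h
  have := Finset.card_le_card hsub
  rw [h2, Finset.card_singleton] at this
  omega

/-- ≤ 1 available incident edges is absurd -/
lemma H0' (h2 : (C ∩ I).card = 2) {Y : Finset (Sym2 V)} (hI : I ⊆ Y) (hY : Y.card ≤ 1) :
    False := by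
  have := Finset.card_le_card (Finset.inter_subset_inter (Finset.Subset.refl C) hI)
  have h3 : (C ∩ Y).card ≤ Y.card := Finset.card_le_card Finset.inter_subset_right
  omega

end twologic

/-- split a card-3 finset containing e -/
lemma three_split {I : Finset (Sym2 V)} {e : Sym2 V} (h3 : I.card = 3) (he : e ∈ I) :
    ∃ s1 s2, I = {e, s1, s2} ∧ s1 ≠ s2 ∧ e ≠ s1 ∧ e ≠ s2 := by
  obtain ⟨s1, hs1, hes1⟩ : ∃ s1 ∈ I.erase e, True := by
    have : (I.erase e).card = 2 := by rw [Finset.card_erase_of_mem he, h3]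
    have : (I.erase e).Nonempty := by rw [← Finset.card_pos, this]; norm_num
    exact ⟨this.choose, this.choose_spec, trivial⟩
  obtain ⟨s2, hs2⟩ : ∃ s2, (I.erase e).erase s1 = {s2} := by
    have : ((I.erase e).erase s1).card = 1 := by
      rw [Finset.card_erase_of_mem hs1, Finset.card_erase_of_mem he, h3]
    exact Finset.card_eq_one.mp this
  have hs1e : s1 ≠ e := Finset.ne_of_mem_erase hs1
  have hs2m : s2 ∈ (I.erase e).erase s1 := by rw [hs2]; simp
  have hs2s1 : s2 ≠ s1 := Finset.ne_of_mem_erase hs2m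
  have hs2e : s2 ≠ e := Finset.ne_of_mem_erase (Finset.mem_of_mem_erase hs2m)
  refine ⟨s1, s2, ?_, fun h => hs2s1 h.symm, hs1e.symm, hs2e.symm⟩
  apply Finset.Subset.antisymm
  · intro x hx
    by_cases hxe : x = e
    · simp [hxe]
    by_cases hxs1 : x = s1
    · simp [hxs1]
    have : x ∈ (I.erase e).erase s1 := by
      apply Finset.mem_erase.mpr ⟨hxs1, Finset.mem_erase.mpr ⟨hxe, hx⟩⟩
    rw [hs2] at this
    simp only [Finset.mem_singleton] at this
    simp [this]
  · intro x hx
    simp only [Finset.mem_insert, Finset.mem_singleton] at hx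
    rcases hx with rfl | rfl | rfl
    · exact he
    · exact Finset.mem_of_mem_erase hs1
    · exact Finset.mem_of_mem_erase (Finset.mem_of_mem_erase hs2m)

/-- counting: if New is fresh-undecided and newly decided, U drops by its card -/
lemma gain_card {E F X F' X' New : Finset (Sym2 V)}
    (hNew : New ⊆ E \ (F ∪ X)) (hsub : New ⊆ F' ∪ X') (hFX : F ∪ X ⊆ F' ∪ X') :
    (E \ (F' ∪ X')).card + New.card ≤ (E \ (F ∪ X)).card := by
  have h1 : E \ (F' ∪ X') ⊆ (E \ (F ∪ X)) \ New := by
    intro e he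
    rw [Finset.mem_sdiff] at he
    rw [Finset.mem_sdiff, Finset.mem_sdiff]
    exact ⟨⟨he.1, fun h => he.2 (hFX h)⟩, fun h => he.2 (hsub h)⟩
  have h2 := Finset.card_le_card h1
  rw [Finset.card_sdiff_of_subset hNew] at h2
  have := Finset.card_le_card hNew
  omega


noncomputable def B (U : ℕ) : ℝ := 2 ^ ((U : ℝ) / 4)

lemma B_pos (U : ℕ) : 0 < B U := Real.rpow_pos_of_pos (by norm_num) _

lemma one_le_B (U : ℕ) : 1 ≤ B U :=
  Real.one_le_rpow (by norm_num) (by positivity)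

lemma B_mono {U U' : ℕ} (h : U ≤ U') : B U ≤ B U' := by
  apply Real.rpow_le_rpow_of_exponent_le (by norm_num)
  have : (U : ℝ) ≤ U' := Nat.cast_le.mpr h
  linarith

lemma B_factor (U k : ℕ) (h : k ≤ U) : B (U - k) = B U * 2 ^ (-(k : ℝ) / 4) := by
  rw [B, B, ← Real.rpow_add (by norm_num)]
  congr 1
  rw [Nat.cast_sub h]
  ring

lemma key_t : (1.68 : ℝ) ≤ 2 ^ ((3 : ℝ) / 4) := by
  have h4 : ((2 : ℝ) ^ ((3 : ℝ) / 4)) ^ (4 : ℕ) = 8 := by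
    rw [← Real.rpow_natCast ((2:ℝ) ^ ((3:ℝ)/4)) 4, ← Real.rpow_mul (by norm_num)]
    rw [show ((3:ℝ)/4 * (4:ℕ) : ℝ) = ((3:ℕ):ℝ) by push_cast; ring, Real.rpow_natCast]
    norm_num
  by_contra hlt
  push_neg at hlt
  have hpos : (0:ℝ) < 2 ^ ((3:ℝ)/4) := Real.rpow_pos_of_pos (by norm_num) _
  have : ((2:ℝ) ^ ((3:ℝ)/4)) ^ (4:ℕ) < (1.68:ℝ) ^ (4:ℕ) :=
    pow_lt_pow_left₀ hlt (le_of_lt hpos) (by norm_num)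
  rw [h4] at this
  norm_num at this

lemma key_half : (2 : ℝ) ^ (-(3:ℝ) / 4) + 2 ^ (-(6:ℝ) / 4) ≤ 1 := by
  set t : ℝ := 2 ^ ((3 : ℝ) / 4) with ht
  have hpos : (0:ℝ) < t := Real.rpow_pos_of_pos (by norm_num) _
  have e1 : (2:ℝ) ^ (-(3:ℝ)/4) = t⁻¹ := by
    rw [show (-(3:ℝ)/4) = -((3:ℝ)/4) by ring, Real.rpow_neg (by norm_num), ht]
  have e2 : (2:ℝ) ^ (-(6:ℝ)/4) = (t ^ 2)⁻¹ := by
    rw [show (-(6:ℝ)/4) = -((3:ℝ)/4 * 2) by ring, Real.rpow_neg (by norm_num)]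
    congr 1
    rw [ht, ← Real.rpow_natCast (2 ^ ((3:ℝ)/4)) 2, ← Real.rpow_mul (by norm_num)]
    norm_num
  rw [e1, e2]
  have hkey : t + 1 ≤ t ^ 2 := by nlinarith [key_t]
  have h2 : (0:ℝ) < t ^ 2 := by positivity
  have heq : t⁻¹ + (t ^ 2)⁻¹ = (t + 1) / t ^ 2 := by
    field_simp
  rw [heq, div_le_one h2]
  exact hkey

lemma rec44 {U : ℕ} (h : 4 ≤ U) : B (U - 4) + B (U - 4) ≤ B U := by
  rw [B_factor U 4 h]
  simp only [Nat.cast_ofNat]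
  have : (2:ℝ) ^ (-(4:ℝ)/4) = 1/2 := by
    rw [show (-(4:ℝ)/4) = -(1:ℝ) by ring, Real.rpow_neg_one]
    norm_num
  rw [this]
  have := B_pos U
  linarith

lemma rec36 {U : ℕ} (h : 6 ≤ U) : B (U - 3) + B (U - 6) ≤ B U := by
  rw [B_factor U 3 (by omega), B_factor U 6 h]
  simp only [Nat.cast_ofNat]
  have hB := B_pos U
  have := key_half
  nlinarith [this, hB]


/-- extract other endpoint of an edge -/
lemma edge_other {e : Sym2 V} (he : e ∈ G.edgeSet) {u : V} (hu : u ∈ e) :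
    ∃ a, e = s(u, a) ∧ G.Adj u a ∧ u ≠ a := by
  induction e with
  | h x y =>
    rw [Sym2.mem_iff] at hu
    rcases hu with rfl | rfl
    · have hadj : G.Adj u y := (SimpleGraph.mem_edgeSet (G := G)).mp he
      exact ⟨y, rfl, hadj, hadj.ne⟩
    · rw [Sym2.eq_swap] at he ⊢
      have hadj : G.Adj u x := by
        have : G.Adj x u := (SimpleGraph.mem_edgeSet (G := G)).mp (by rwa [Sym2.eq_swap] at he)
        exact this.symm
      exact ⟨x, by rw [Sym2.eq_swap], hadj, hadj.ne⟩

/-- degree bound -/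
lemma card_incE_le (hdeg : ∀ v, (G.neighborSet v).ncard ≤ 3) (v : V) :
    (incE G v).card ≤ 3 := by
  have hcoe : (↑(incE G v) : Set (Sym2 V)) = G.incidenceSet v := by
    ext e
    simp only [Finset.coe_filter, incE, Set.mem_setOf_eq, mem_EF]
    exact ⟨fun ⟨h1, h2⟩ => ⟨h1, h2⟩, fun ⟨h1, h2⟩ => ⟨h1, h2⟩⟩
  have h1 : (incE G v).card = (G.incidenceSet v).ncard := by
    rw [← hcoe, Set.ncard_coe_finset]
  have h2 : (G.incidenceSet v).ncard = (G.neighborSet v).ncard := by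
    unfold Set.ncard
    exact Nat.card_congr (G.incidenceSetEquivNeighborSet v)
  rw [h1, h2]
  exact hdeg v

/-- the closure argument: if every F-incident vertex has two F-edges and F is nonempty,
then any Hamiltonian cycle edge set containing F equals F -/
lemma closure_lemma {F C : Finset (Sym2 V)} (hHam : HamC G C) (hFC : F ⊆ C)
    (hF2 : ∀ v, (F ∩ incE G v).card = 0 ∨ (F ∩ incE G v).card = 2)
    (hFne : F.Nonempty) : C ⊆ F := by
  classical
  obtain ⟨u0, p, hp, hC⟩ := hHam
  -- S := vertices with two F-edges
  set S : Set V := {v | (F ∩ incE G v).card = 2} with hS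
  -- basic translation: edges of p = C
  have hedge : ∀ e, e ∈ p.edges ↔ e ∈ C := by
    intro e
    have : (e ∈ (↑C : Set (Sym2 V))) ↔ e ∈ C := Iff.rfl
    rw [← this, hC]
    simp
  -- key step: if v ∈ S and e ∈ C with v ∈ e then e ∈ F
  have hstep : ∀ v, v ∈ S → ∀ e ∈ C, v ∈ e → e ∈ F := by
    intro v hv e heC hve
    have h2 := ham_two ⟨u0, p, hp, hC⟩ v
    have hsub : F ∩ incE G v ⊆ C ∩ incE G v :=
      Finset.inter_subset_inter hFC (Finset.Subset.refl _)
    have hv2 : (F ∩ incE G v).card = 2 := hv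
    have heq : F ∩ incE G v = C ∩ incE G v :=
      Finset.eq_of_subset_of_card_le hsub (by rw [h2, hv2])
    have heCin : e ∈ C ∩ incE G v := by
      refine Finset.mem_inter.mpr ⟨heC, ?_⟩
      rw [mem_incE]
      have : e ∈ p.edges := (hedge e).mpr heC
      exact ⟨p.edges_subset_edgeSet this, hve⟩
    rw [← heq] at heCin
    exact (Finset.mem_inter.mp heCin).1
  -- any vertex incident to an F-edge is in S
  have hFS : ∀ v, ∀ e ∈ F, v ∈ e → v ∈ S := by
    intro v e heF hve
    have h1 : e ∈ F ∩ incE G v := by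
      refine Finset.mem_inter.mpr ⟨heF, ?_⟩
      rw [mem_incE]
      have : e ∈ p.edges := (hedge e).mpr (hFC heF)
      exact ⟨p.edges_subset_edgeSet this, hve⟩
    have : (F ∩ incE G v).card ≠ 0 := by
      intro h
      rw [Finset.card_eq_zero] at h
      rw [h] at h1
      exact absurd h1 (Finset.notMem_empty _)
    rcases hF2 v with h | h
    · exact absurd h this
    · exact h
  -- S is closed along C-walks
  have hwalk : ∀ {x y : V} (w : G.Walk x y), (∀ e ∈ w.edges, e ∈ C) → x ∈ S → y ∈ S := by
    intro x y w
    induction w with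
    | nil => exact fun _ hx => hx
    | @cons a b c hadj r ih =>
      intro hsub ha
      have hab : s(a, b) ∈ C := hsub _ (by simp)
      have habF : s(a, b) ∈ F := hstep a ha _ hab (by simp)
      have hb : b ∈ S := hFS b _ habF (by simp)
      exact ih (fun e he => hsub e (by simp [he])) hb
  -- some vertex is in S
  obtain ⟨f0, hf0⟩ := hFne
  have hf0' : ¬ (s(f0.out.1, f0.out.2) = f0) → True := fun _ => trivial
  obtain ⟨x0, hx0S⟩ : ∃ x0, x0 ∈ S := by
    induction f0 using Sym2.ind with
    | h x y => exact ⟨x, hFS x _ hf0 (by simp)⟩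
  -- every vertex is in S : use connectivity of the cycle
  have hall : ∀ v, v ∈ S := by
    intro v
    have hconn := p.toSubgraph_connected
    rw [SimpleGraph.Subgraph.connected_iff_forall_exists_walk_subgraph] at hconn
    have hx0v : x0 ∈ p.toSubgraph.verts := by
      rw [Walk.mem_verts_toSubgraph]
      exact hp.mem_support x0
    have hvv : v ∈ p.toSubgraph.verts := by
      rw [Walk.mem_verts_toSubgraph]
      exact hp.mem_support v
    obtain ⟨w, hw⟩ := hconn.2 hx0v hvv
    refine hwalk w ?_ hx0S
    intro e he
    have : e ∈ p.toSubgraph.edgeSet :=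
      SimpleGraph.Subgraph.edgeSet_mono hw ((Walk.mem_edges_toSubgraph w).mpr he)
    rw [Walk.mem_edges_toSubgraph] at this
    exact (hedge e).mp this
  -- conclude C ⊆ F
  intro e heC
  induction e using Sym2.ind with
  | h x y => exact hstep x (hall x) _ heC (by simp)


-- small Sym2 helpers
lemma not_mem_edge {x u w : V} (hxu : x ≠ u) (hxw : x ≠ w) : x ∉ (s(u, w) : Sym2 V) := by
  simp [Sym2.mem_iff, hxu, hxw]

lemma edge_ne_of_mem {e f : Sym2 V} {x : V} (hx : x ∈ e) (hnx : x ∉ f) : e ≠ f :=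
  fun h => hnx (h ▸ hx)

lemma sym2_eq_of_two_mem {e : Sym2 V} {w z : V} (hw : w ∈ e) (hz : z ∈ e) (hne : w ≠ z) :
    e = s(w, z) := by
  induction e using Sym2.ind with
  | h x y =>
    rw [Sym2.mem_iff] at hw hz
    rcases hw with rfl | rfl <;> rcases hz with rfl | rfl
    · exact absurd rfl hne
    · rfl
    · rw [Sym2.eq_swap]
    · exact absurd rfl hne

lemma three_split_two {I : Finset (Sym2 V)} {e f : Sym2 V} (h3 : I.card = 3) (he : e ∈ I)
    (hf : f ∈ I) (hef : e ≠ f) : ∃ g, I = {e, f, g} ∧ e ≠ g ∧ f ≠ g := by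
  obtain ⟨s1, s2, hsplit, h12, he1, he2⟩ := three_split h3 he
  rw [hsplit] at hf
  simp only [Finset.mem_insert, Finset.mem_singleton] at hf
  rcases hf with rfl | rfl | rfl
  · exact absurd rfl hef
  · exact ⟨s2, hsplit, he2, h12⟩
  · refine ⟨s1, ?_, he1, fun h => h12 h.symm⟩
    rw [hsplit]
    ext x
    simp only [Finset.mem_insert, Finset.mem_singleton]
    tauto

/-- generic double branching step -/
lemma NC_step2 {U g₁ g₂ : ℕ} {F X F₁ X₁ F₂ X₂ New₁ New₂ : Finset (Sym2 V)} (e₀ : Sym2 V)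
    (IH : ∀ U', U' < U → ∀ F' X' : Finset (Sym2 V), (F' ∪ X').Nonempty → F' ⊆ EF G →
      X' ⊆ EF G → (EF G \ (F' ∪ X')).card ≤ U' → (NC G F' X' : ℝ) ≤ B U')
    (hU : (EF G \ (F ∪ X)).card ≤ U)
    (h1 : ∀ C, Ok G F X C → e₀ ∈ C → Ok G F₁ X₁ C)
    (h2 : ∀ C, Ok G F X C → e₀ ∉ C → Ok G F₂ X₂ C)
    (hne₁ : (F₁ ∪ X₁).Nonempty) (hne₂ : (F₂ ∪ X₂).Nonempty)
    (hFE1 : F₁ ⊆ EF G) (hXE1 : X₁ ⊆ EF G) (hFE2 : F₂ ⊆ EF G) (hXE2 : X₂ ⊆ EF G)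
    (hN1 : New₁ ⊆ EF G \ (F ∪ X)) (hN1' : New₁ ⊆ F₁ ∪ X₁) (hmono1 : F ∪ X ⊆ F₁ ∪ X₁)
    (hN2 : New₂ ⊆ EF G \ (F ∪ X)) (hN2' : New₂ ⊆ F₂ ∪ X₂) (hmono2 : F ∪ X ⊆ F₂ ∪ X₂)
    (hg1 : g₁ ≤ New₁.card) (hg2 : g₂ ≤ New₂.card) (hg1p : 1 ≤ g₁) (hg2p : 1 ≤ g₂) :
    (NC G F X : ℝ) ≤ B (U - g₁) + B (U - g₂) ∧ g₁ ≤ U ∧ g₂ ≤ U := by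
  have hbr := NC_branch e₀ h1 h2
  have hgain1 := gain_card hN1 hN1' hmono1
  have hgain2 := gain_card hN2 hN2' hmono2
  have hU1 : (EF G \ (F₁ ∪ X₁)).card ≤ U - g₁ := by omega
  have hU2 : (EF G \ (F₂ ∪ X₂)).card ≤ U - g₂ := by omega
  have hlt1 : U - g₁ < U := by omega
  have hlt2 : U - g₂ < U := by omega
  have hb1 := IH (U - g₁) hlt1 F₁ X₁ hne₁ hFE1 hXE1 hU1
  have hb2 := IH (U - g₂) hlt2 F₂ X₂ hne₂ hFE2 hXE2 hU2
  refine ⟨?_, by omega, by omega⟩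
  calc (NC G F X : ℝ) ≤ ((NC G F₁ X₁ + NC G F₂ X₂ : ℕ) : ℝ) := by exact_mod_cast hbr
    _ = (NC G F₁ X₁ : ℝ) + (NC G F₂ X₂ : ℝ) := by push_cast; ring
    _ ≤ B (U - g₁) + B (U - g₂) := add_le_add hb1 hb2

/-- one-sided step (no branching, e.g. one side is vacuous) -/
lemma NC_step1 {U g₂ : ℕ} {F X F₂ X₂ New₂ : Finset (Sym2 V)}
    (IH : ∀ U', U' < U → ∀ F' X' : Finset (Sym2 V), (F' ∪ X').Nonempty → F' ⊆ EF G →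
      X' ⊆ EF G → (EF G \ (F' ∪ X')).card ≤ U' → (NC G F' X' : ℝ) ≤ B U')
    (hU : (EF G \ (F ∪ X)).card ≤ U)
    (himp : ∀ C, Ok G F X C → Ok G F₂ X₂ C)
    (hne₂ : (F₂ ∪ X₂).Nonempty) (hFE2 : F₂ ⊆ EF G) (hXE2 : X₂ ⊆ EF G)
    (hN2 : New₂ ⊆ EF G \ (F ∪ X)) (hN2' : New₂ ⊆ F₂ ∪ X₂) (hmono2 : F ∪ X ⊆ F₂ ∪ X₂)
    (hg2 : g₂ ≤ New₂.card) (hg2p : 1 ≤ g₂) :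
    (NC G F X : ℝ) ≤ B (U - g₂) := by
  have hgain2 := gain_card hN2 hN2' hmono2
  have hU2 : (EF G \ (F₂ ∪ X₂)).card ≤ U - g₂ := by omega
  have hlt2 : U - g₂ < U := by omega
  have hb2 := IH (U - g₂) hlt2 F₂ X₂ hne₂ hFE2 hXE2 hU2
  calc (NC G F X : ℝ) ≤ (NC G F₂ X₂ : ℝ) := by exact_mod_cast NC_mono himp
    _ ≤ B (U - g₂) := hb2

lemma card_three {a b c : Sym2 V} (h1 : a ≠ b) (h2 : a ≠ c) (h3 : b ≠ c) :
    ({a, b, c} : Finset (Sym2 V)).card = 3 := by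
  rw [Finset.card_insert_of_notMem (by simp [h1, h2]),
    Finset.card_insert_of_notMem (by simp [h3]), Finset.card_singleton]

lemma card_four {a b c d : Sym2 V} (h1 : a ≠ b) (h2 : a ≠ c) (h3 : a ≠ d) (h4 : b ≠ c)
    (h5 : b ≠ d) (h6 : c ≠ d) : ({a, b, c, d} : Finset (Sym2 V)).card = 4 := by
  rw [Finset.card_insert_of_notMem (by simp [h1, h2, h3]),
    Finset.card_insert_of_notMem (by simp [h4, h5]),
    Finset.card_insert_of_notMem (by simp [h6]), Finset.card_singleton]

section warm
variable {U : ℕ} {F X : Finset (Sym2 V)} {u a w : V} {fu e1 e2 : Sym2 V}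

lemma warm00
    (IH : ∀ U', U' < U → ∀ F' X' : Finset (Sym2 V), (F' ∪ X').Nonempty → F' ⊆ EF G →
      X' ⊆ EF G → (EF G \ (F' ∪ X')).card ≤ U' → (NC G F' X' : ℝ) ≤ B U')
    (hU : (EF G \ (F ∪ X)).card ≤ U) (hFE : F ⊆ EF G) (hXE : X ⊆ EF G)
    (hfuF : fu ∈ F)
    (hsplitu : incE G u = {fu, e1, e2}) (h12 : e1 ≠ e2) (hf1 : fu ≠ e1) (hf2 : fu ≠ e2)
    (he1a : e1 = s(u, a)) (he2w : e2 = s(u, w))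
    (hua : u ≠ a) (huw : u ≠ w) (haw : a ≠ w)
    (he1D : e1 ∈ EF G \ (F ∪ X)) (he2D : e2 ∈ EF G \ (F ∪ X))
    (ha3 : (incE G a).card = 3) (haX : ∀ f ∈ incE G a, f ∉ X)
    (hw3 : (incE G w).card = 3) (hwX : ∀ f ∈ incE G w, f ∉ X)
    (hfa0 : F ∩ incE G a = ∅) (hfw0 : F ∩ incE G w = ∅) :
    (NC G F X : ℝ) ≤ B U := by
  -- basic memberships
  have he1E : e1 ∈ EF G := (Finset.mem_sdiff.mp he1D).1
  have he2E : e2 ∈ EF G := (Finset.mem_sdiff.mp he2D).1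
  have he1nF : e1 ∉ F := fun h =>
    (Finset.notMem_union.mp (Finset.mem_sdiff.mp he1D).2).1 h
  have he2nF : e2 ∉ F := fun h =>
    (Finset.notMem_union.mp (Finset.mem_sdiff.mp he2D).2).1 h
  have hfuiu : fu ∈ incE G u := by rw [hsplitu]; simp
  have he1iu : e1 ∈ incE G u := by rw [hsplitu]; simp
  have he2iu : e2 ∈ incE G u := by rw [hsplitu]; simp
  have he1ia : e1 ∈ incE G a := by
    rw [mem_incE G]
    exact ⟨(mem_EF G).mp he1E, by rw [he1a]; simp⟩
  have he2iw : e2 ∈ incE G w := by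
    rw [mem_incE G]
    exact ⟨(mem_EF G).mp he2E, by rw [he2w]; simp⟩
  -- splits at a and w
  obtain ⟨a1, a2, hsplita, ha12, he1a1, he1a2⟩ := three_split ha3 he1ia
  obtain ⟨s1, s2, hsplitw, hs12, he2s1, he2s2⟩ := three_split hw3 he2iw
  have ha1i : a1 ∈ incE G a := by rw [hsplita]; simp
  have ha2i : a2 ∈ incE G a := by rw [hsplita]; simp
  have hs1i : s1 ∈ incE G w := by rw [hsplitw]; simp
  have hs2i : s2 ∈ incE G w := by rw [hsplitw]; simp
  have hmem_a1 : a ∈ a1 := ((mem_incE G).mp ha1i).2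
  have hmem_a2 : a ∈ a2 := ((mem_incE G).mp ha2i).2
  have hmem_s1 : w ∈ s1 := ((mem_incE G).mp hs1i).2
  have hmem_s2 : w ∈ s2 := ((mem_incE G).mp hs2i).2
  have ha1D : a1 ∈ EF G \ (F ∪ X) := by
    refine Finset.mem_sdiff.mpr ⟨incE_subset_EF ha1i, Finset.notMem_union.mpr ⟨?_, haX _ ha1i⟩⟩
    intro h
    have : a1 ∈ F ∩ incE G a := Finset.mem_inter.mpr ⟨h, ha1i⟩
    rw [hfa0] at this; exact absurd this (Finset.notMem_empty _)
  have ha2D : a2 ∈ EF G \ (F ∪ X) := by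
    refine Finset.mem_sdiff.mpr ⟨incE_subset_EF ha2i, Finset.notMem_union.mpr ⟨?_, haX _ ha2i⟩⟩
    intro h
    have : a2 ∈ F ∩ incE G a := Finset.mem_inter.mpr ⟨h, ha2i⟩
    rw [hfa0] at this; exact absurd this (Finset.notMem_empty _)
  have hs1D : s1 ∈ EF G \ (F ∪ X) := by
    refine Finset.mem_sdiff.mpr ⟨incE_subset_EF hs1i, Finset.notMem_union.mpr ⟨?_, hwX _ hs1i⟩⟩
    intro h
    have : s1 ∈ F ∩ incE G w := Finset.mem_inter.mpr ⟨h, hs1i⟩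
    rw [hfw0] at this; exact absurd this (Finset.notMem_empty _)
  have hs2D : s2 ∈ EF G \ (F ∪ X) := by
    refine Finset.mem_sdiff.mpr ⟨incE_subset_EF hs2i, Finset.notMem_union.mpr ⟨?_, hwX _ hs2i⟩⟩
    intro h
    have : s2 ∈ F ∩ incE G w := Finset.mem_inter.mpr ⟨h, hs2i⟩
    rw [hfw0] at this; exact absurd this (Finset.notMem_empty _)
  -- distinctness
  have hs1e1 : s1 ≠ e1 := edge_ne_of_mem hmem_s1 (he1a ▸ not_mem_edge huw.symm haw.symm)
  have hs2e1 : s2 ≠ e1 := edge_ne_of_mem hmem_s2 (he1a ▸ not_mem_edge huw.symm haw.symm)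
  have ha1e2 : a1 ≠ e2 := edge_ne_of_mem hmem_a1 (he2w ▸ not_mem_edge hua.symm haw)
  have ha2e2 : a2 ≠ e2 := edge_ne_of_mem hmem_a2 (he2w ▸ not_mem_edge hua.symm haw)
  -- side 1 : e1 ∈ C
  have himp1 : ∀ C, Ok G F X C → e1 ∈ C →
      Ok G (insert e1 (insert s1 (insert s2 F))) (insert e2 X) C := by
    intro C hC he1C
    obtain ⟨hHam, hFC, hdisj⟩ := hC
    have h2u := ham_two hHam u
    have h2w := ham_two hHam w
    have hfuC : fu ∈ C := hFC hfuF
    have he2nC : e2 ∉ C :=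
      H1 h2u hfuC he1C hf1 hfuiu he1iu he2iu hf2.symm h12.symm
    have hsC := H2 h2w (le_of_eq hsplitw) he2nC hs12
    refine ⟨hHam, ?_, ?_⟩
    · exact Finset.insert_subset he1C (Finset.insert_subset hsC.1 (Finset.insert_subset hsC.2 hFC))
    · rw [Finset.disjoint_insert_right]
      exact ⟨he2nC, hdisj⟩
  -- side 2 : e1 ∉ C
  have himp2 : ∀ C, Ok G F X C → e1 ∉ C →
      Ok G (insert e2 (insert a1 (insert a2 F))) (insert e1 X) C := by
    intro C hC he1nC
    obtain ⟨hHam, hFC, hdisj⟩ := hC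
    have h2u := ham_two hHam u
    have h2a := ham_two hHam a
    have hsubu : incE G u ⊆ {e1, fu, e2} := by
      rw [hsplitu]; intro x hx; simp only [Finset.mem_insert, Finset.mem_singleton] at hx ⊢; tauto
    have he2C := (H2 h2u hsubu he1nC hf2).2
    have haC := H2 h2a (le_of_eq hsplita) he1nC ha12
    refine ⟨hHam, ?_, ?_⟩
    · exact Finset.insert_subset he2C (Finset.insert_subset haC.1 (Finset.insert_subset haC.2 hFC))
    · rw [Finset.disjoint_insert_right]
      exact ⟨he1nC, hdisj⟩
  -- counting
  have hstep := NC_step2 (g₁ := 4) (g₂ := 4)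
    (New₁ := {e1, e2, s1, s2}) (New₂ := {e1, e2, a1, a2}) e1 IH hU himp1 himp2
    (by simp) (by simp)
    (Finset.insert_subset he1E (Finset.insert_subset (incE_subset_EF hs1i)
      (Finset.insert_subset (incE_subset_EF hs2i) hFE)))
    (Finset.insert_subset he2E hXE)
    (Finset.insert_subset he2E (Finset.insert_subset (incE_subset_EF ha1i)
      (Finset.insert_subset (incE_subset_EF ha2i) hFE)))
    (Finset.insert_subset he1E hXE)
    (by intro x hx; simp only [Finset.mem_insert, Finset.mem_singleton] at hx
        rcases hx with rfl | rfl | rfl | rfl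
        exacts [he1D, he2D, hs1D, hs2D])
    (by intro x hx; simp only [Finset.mem_insert, Finset.mem_singleton] at hx
        rcases hx with rfl | rfl | rfl | rfl <;> simp)
    (by intro x hx; rcases Finset.mem_union.mp hx with h | h <;> simp [h])
    (by intro x hx; simp only [Finset.mem_insert, Finset.mem_singleton] at hx
        rcases hx with rfl | rfl | rfl | rfl
        exacts [he1D, he2D, ha1D, ha2D])
    (by intro x hx; simp only [Finset.mem_insert, Finset.mem_singleton] at hx
        rcases hx with rfl | rfl | rfl | rfl <;> simp)
    (by intro x hx; rcases Finset.mem_union.mp hx with h | h <;> simp [h])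
    (le_of_eq (card_four h12 hs1e1.symm hs2e1.symm he2s1 he2s2 hs12).symm)
    (le_of_eq (card_four h12 he1a1 he1a2 ha1e2.symm ha2e2.symm ha12).symm)
    (by norm_num) (by norm_num)
  obtain ⟨hstep', hU4, _⟩ := hstep
  calc (NC G F X : ℝ) ≤ B (U - 4) + B (U - 4) := hstep'
    _ ≤ B U := rec44 hU4

lemma warm11
    (IH : ∀ U', U' < U → ∀ F' X' : Finset (Sym2 V), (F' ∪ X').Nonempty → F' ⊆ EF G →
      X' ⊆ EF G → (EF G \ (F' ∪ X')).card ≤ U' → (NC G F' X' : ℝ) ≤ B U')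
    (hU : (EF G \ (F ∪ X)).card ≤ U) (hFE : F ⊆ EF G) (hXE : X ⊆ EF G)
    (hfuF : fu ∈ F)
    (hsplitu : incE G u = {fu, e1, e2}) (h12 : e1 ≠ e2) (hf1 : fu ≠ e1) (hf2 : fu ≠ e2)
    (he1a : e1 = s(u, a)) (he2w : e2 = s(u, w))
    (hua : u ≠ a) (huw : u ≠ w) (haw : a ≠ w)
    (he1D : e1 ∈ EF G \ (F ∪ X)) (he2D : e2 ∈ EF G \ (F ∪ X))
    (ha3 : (incE G a).card = 3) (haX : ∀ f ∈ incE G a, f ∉ X)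
    (hw3 : (incE G w).card = 3) (hwX : ∀ f ∈ incE G w, f ∉ X)
    {fa fw : Sym2 V}
    (hFa : F ∩ incE G a = {fa}) (hFw : F ∩ incE G w = {fw}) :
    (NC G F X : ℝ) ≤ B U := by
  have he1E : e1 ∈ EF G := (Finset.mem_sdiff.mp he1D).1
  have he2E : e2 ∈ EF G := (Finset.mem_sdiff.mp he2D).1
  have he1nF : e1 ∉ F := fun h =>
    (Finset.notMem_union.mp (Finset.mem_sdiff.mp he1D).2).1 h
  have he2nF : e2 ∉ F := fun h =>
    (Finset.notMem_union.mp (Finset.mem_sdiff.mp he2D).2).1 h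
  have hfuiu : fu ∈ incE G u := by rw [hsplitu]; simp
  have he1iu : e1 ∈ incE G u := by rw [hsplitu]; simp
  have he2iu : e2 ∈ incE G u := by rw [hsplitu]; simp
  have he1ia : e1 ∈ incE G a := by
    rw [mem_incE G]
    exact ⟨(mem_EF G).mp he1E, by rw [he1a]; simp⟩
  have he2iw : e2 ∈ incE G w := by
    rw [mem_incE G]
    exact ⟨(mem_EF G).mp he2E, by rw [he2w]; simp⟩
  -- the forced edges at a and w
  have hfaF : fa ∈ F := by
    have : fa ∈ F ∩ incE G a := by rw [hFa]; simp
    exact (Finset.mem_inter.mp this).1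
  have hfai : fa ∈ incE G a := by
    have : fa ∈ F ∩ incE G a := by rw [hFa]; simp
    exact (Finset.mem_inter.mp this).2
  have hfwF : fw ∈ F := by
    have : fw ∈ F ∩ incE G w := by rw [hFw]; simp
    exact (Finset.mem_inter.mp this).1
  have hfwi : fw ∈ incE G w := by
    have : fw ∈ F ∩ incE G w := by rw [hFw]; simp
    exact (Finset.mem_inter.mp this).2
  have he1fa : e1 ≠ fa := fun h => he1nF (h ▸ hfaF)
  have he2fw : e2 ≠ fw := fun h => he2nF (h ▸ hfwF)
  obtain ⟨ga, hsplita, he1ga, hfaga⟩ := three_split_two ha3 he1ia hfai he1fa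
  obtain ⟨gw, hsplitw, he2gw, hfwgw⟩ := three_split_two hw3 he2iw hfwi he2fw
  have hgai : ga ∈ incE G a := by rw [hsplita]; simp
  have hgwi : gw ∈ incE G w := by rw [hsplitw]; simp
  have hmem_ga : a ∈ ga := ((mem_incE G).mp hgai).2
  have hmem_gw : w ∈ gw := ((mem_incE G).mp hgwi).2
  have hganF : ga ∉ F := by
    intro h
    have : ga ∈ F ∩ incE G a := Finset.mem_inter.mpr ⟨h, hgai⟩
    rw [hFa] at this
    exact hfaga (Finset.mem_singleton.mp this).symm
  have hgwnF : gw ∉ F := by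
    intro h
    have : gw ∈ F ∩ incE G w := Finset.mem_inter.mpr ⟨h, hgwi⟩
    rw [hFw] at this
    exact hfwgw (Finset.mem_singleton.mp this).symm
  have hgaD : ga ∈ EF G \ (F ∪ X) := Finset.mem_sdiff.mpr
    ⟨incE_subset_EF hgai, Finset.notMem_union.mpr ⟨hganF, haX _ hgai⟩⟩
  have hgwD : gw ∈ EF G \ (F ∪ X) := Finset.mem_sdiff.mpr
    ⟨incE_subset_EF hgwi, Finset.notMem_union.mpr ⟨hgwnF, hwX _ hgwi⟩⟩
  -- distinctness
  have hgae2 : ga ≠ e2 := edge_ne_of_mem hmem_ga (he2w ▸ not_mem_edge hua.symm haw)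
  have hgwe1 : gw ≠ e1 := edge_ne_of_mem hmem_gw (he1a ▸ not_mem_edge huw.symm haw.symm)
  have hsubu : incE G u ⊆ {e1, fu, e2} := by
    rw [hsplitu]; intro x hx; simp only [Finset.mem_insert, Finset.mem_singleton] at hx ⊢; tauto
  by_cases hgg : ga = gw
  · -- degenerate : both branches are contradictory, so NC = 0
    have hzero : NC G F X = 0 := by
      apply NC_zero
      intro C hC
      obtain ⟨hHam, hFC, hdisj⟩ := hC
      have h2u := ham_two hHam u
      have h2a := ham_two hHam a
      have h2w := ham_two hHam w
      have hfuC : fu ∈ C := hFC hfuF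
      have hfaC : fa ∈ C := hFC hfaF
      have hfwC : fw ∈ C := hFC hfwF
      by_cases he1C : e1 ∈ C
      · have he2nC : e2 ∉ C :=
          H1 h2u hfuC he1C hf1 hfuiu he1iu he2iu hf2.symm h12.symm
        have hganC : ga ∉ C :=
          H1 h2a hfaC he1C (fun h => he1fa h.symm) hfai he1ia hgai hfaga.symm he1ga.symm
        have hgwC : gw ∈ C := (H2 h2w (le_of_eq hsplitw) he2nC hfwgw).2
        rw [← hgg] at hgwC
        exact hganC hgwC
      · have he2C : e2 ∈ C := (H2 h2u hsubu he1C hf2).2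
        have hgaC : ga ∈ C := (H2 h2a (le_of_eq hsplita) he1C hfaga).2
        have hgwnC : gw ∉ C :=
          H1 h2w hfwC he2C (fun h => he2fw h.symm) hfwi he2iw hgwi hfwgw.symm he2gw.symm
        rw [hgg] at hgaC
        exact hgwnC hgaC
    rw [hzero]
    calc ((0:ℕ) : ℝ) = 0 := by norm_num
      _ ≤ B U := le_of_lt (B_pos U)
  · -- nondegenerate : (4,4)
    have himp1 : ∀ C, Ok G F X C → e1 ∈ C →
        Ok G (insert e1 (insert gw F)) (insert e2 (insert ga X)) C := by
      intro C hC he1C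
      obtain ⟨hHam, hFC, hdisj⟩ := hC
      have h2u := ham_two hHam u
      have h2a := ham_two hHam a
      have h2w := ham_two hHam w
      have hfuC : fu ∈ C := hFC hfuF
      have hfaC : fa ∈ C := hFC hfaF
      have he2nC : e2 ∉ C :=
        H1 h2u hfuC he1C hf1 hfuiu he1iu he2iu hf2.symm h12.symm
      have hganC : ga ∉ C :=
        H1 h2a hfaC he1C (fun h => he1fa h.symm) hfai he1ia hgai hfaga.symm he1ga.symm
      have hgwC : gw ∈ C := (H2 h2w (le_of_eq hsplitw) he2nC hfwgw).2
      refine ⟨hHam, Finset.insert_subset he1C (Finset.insert_subset hgwC hFC), ?_⟩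
      rw [Finset.disjoint_insert_right, Finset.disjoint_insert_right]
      exact ⟨he2nC, hganC, hdisj⟩
    have himp2 : ∀ C, Ok G F X C → e1 ∉ C →
        Ok G (insert e2 (insert ga F)) (insert e1 (insert gw X)) C := by
      intro C hC he1nC
      obtain ⟨hHam, hFC, hdisj⟩ := hC
      have h2u := ham_two hHam u
      have h2a := ham_two hHam a
      have h2w := ham_two hHam w
      have hfwC : fw ∈ C := hFC hfwF
      have he2C : e2 ∈ C := (H2 h2u hsubu he1nC hf2).2
      have hgaC : ga ∈ C := (H2 h2a (le_of_eq hsplita) he1nC hfaga).2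
      have hgwnC : gw ∉ C :=
        H1 h2w hfwC he2C (fun h => he2fw h.symm) hfwi he2iw hgwi hfwgw.symm he2gw.symm
      refine ⟨hHam, Finset.insert_subset he2C (Finset.insert_subset hgaC hFC), ?_⟩
      rw [Finset.disjoint_insert_right, Finset.disjoint_insert_right]
      exact ⟨he1nC, hgwnC, hdisj⟩
    have hcard : ({e1, e2, ga, gw} : Finset (Sym2 V)).card = 4 :=
      card_four h12 he1ga (fun h => hgwe1 h.symm) hgae2.symm he2gw hgg
    have hstep := NC_step2 (g₁ := 4) (g₂ := 4)
      (New₁ := {e1, e2, ga, gw}) (New₂ := {e1, e2, ga, gw}) e1 IH hU himp1 himp2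
      (by simp) (by simp)
      (Finset.insert_subset he1E (Finset.insert_subset (incE_subset_EF hgwi) hFE))
      (Finset.insert_subset he2E (Finset.insert_subset (incE_subset_EF hgai) hXE))
      (Finset.insert_subset he2E (Finset.insert_subset (incE_subset_EF hgai) hFE))
      (Finset.insert_subset he1E (Finset.insert_subset (incE_subset_EF hgwi) hXE))
      (by intro x hx; simp only [Finset.mem_insert, Finset.mem_singleton] at hx
          rcases hx with rfl | rfl | rfl | rfl
          exacts [he1D, he2D, hgaD, hgwD])
      (by intro x hx; simp only [Finset.mem_insert, Finset.mem_singleton] at hx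
          rcases hx with rfl | rfl | rfl | rfl <;> simp)
      (by intro x hx; rcases Finset.mem_union.mp hx with h | h <;> simp [h])
      (by intro x hx; simp only [Finset.mem_insert, Finset.mem_singleton] at hx
          rcases hx with rfl | rfl | rfl | rfl
          exacts [he1D, he2D, hgaD, hgwD])
      (by intro x hx; simp only [Finset.mem_insert, Finset.mem_singleton] at hx
          rcases hx with rfl | rfl | rfl | rfl <;> simp)
      (by intro x hx; rcases Finset.mem_union.mp hx with h | h <;> simp [h])
      (le_of_eq hcard.symm) (le_of_eq hcard.symm) (by norm_num) (by norm_num)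
    obtain ⟨hstep', hU4, _⟩ := hstep
    calc (NC G F X : ℝ) ≤ B (U - 4) + B (U - 4) := hstep'
      _ ≤ B U := rec44 hU4

lemma warm10
    (IH : ∀ U', U' < U → ∀ F' X' : Finset (Sym2 V), (F' ∪ X').Nonempty → F' ⊆ EF G →
      X' ⊆ EF G → (EF G \ (F' ∪ X')).card ≤ U' → (NC G F' X' : ℝ) ≤ B U')
    (hU : (EF G \ (F ∪ X)).card ≤ U) (hFE : F ⊆ EF G) (hXE : X ⊆ EF G)
    (hsat : ∀ v : V, ((EF G \ (F ∪ X)) ∩ incE G v).Nonempty →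
      (incE G v).card = 3 ∧ (∀ f ∈ incE G v, f ∉ X) ∧ (F ∩ incE G v).card ≤ 1)
    (hfuF : fu ∈ F)
    (hsplitu : incE G u = {fu, e1, e2}) (h12 : e1 ≠ e2) (hf1 : fu ≠ e1) (hf2 : fu ≠ e2)
    (he1a : e1 = s(u, a)) (he2w : e2 = s(u, w))
    (hua : u ≠ a) (huw : u ≠ w) (haw : a ≠ w)
    (he1D : e1 ∈ EF G \ (F ∪ X)) (he2D : e2 ∈ EF G \ (F ∪ X))
    (ha3 : (incE G a).card = 3) (haX : ∀ f ∈ incE G a, f ∉ X)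
    (hw3 : (incE G w).card = 3) (hwX : ∀ f ∈ incE G w, f ∉ X)
    {fa : Sym2 V}
    (hFa : F ∩ incE G a = {fa}) (hfw0 : F ∩ incE G w = ∅) :
    (NC G F X : ℝ) ≤ B U := by
  have he1E : e1 ∈ EF G := (Finset.mem_sdiff.mp he1D).1
  have he2E : e2 ∈ EF G := (Finset.mem_sdiff.mp he2D).1
  have he1nF : e1 ∉ F := fun h =>
    (Finset.notMem_union.mp (Finset.mem_sdiff.mp he1D).2).1 h
  have he2nF : e2 ∉ F := fun h =>
    (Finset.notMem_union.mp (Finset.mem_sdiff.mp he2D).2).1 h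
  have hfuiu : fu ∈ incE G u := by rw [hsplitu]; simp
  have he1iu : e1 ∈ incE G u := by rw [hsplitu]; simp
  have he2iu : e2 ∈ incE G u := by rw [hsplitu]; simp
  have he1ia : e1 ∈ incE G a := by
    rw [mem_incE G]
    exact ⟨(mem_EF G).mp he1E, by rw [he1a]; simp⟩
  have he2iw : e2 ∈ incE G w := by
    rw [mem_incE G]
    exact ⟨(mem_EF G).mp he2E, by rw [he2w]; simp⟩
  have hsubu : incE G u ⊆ {e1, fu, e2} := by
    rw [hsplitu]; intro x hx; simp only [Finset.mem_insert, Finset.mem_singleton] at hx ⊢; tauto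
  -- forced edge at a
  have hfaF : fa ∈ F := by
    have : fa ∈ F ∩ incE G a := by rw [hFa]; simp
    exact (Finset.mem_inter.mp this).1
  have hfai : fa ∈ incE G a := by
    have : fa ∈ F ∩ incE G a := by rw [hFa]; simp
    exact (Finset.mem_inter.mp this).2
  have he1fa : e1 ≠ fa := fun h => he1nF (h ▸ hfaF)
  obtain ⟨ga, hsplita, he1ga, hfaga⟩ := three_split_two ha3 he1ia hfai he1fa
  have hgai : ga ∈ incE G a := by rw [hsplita]; simp
  have hmem_ga : a ∈ ga := ((mem_incE G).mp hgai).2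
  have hganF : ga ∉ F := by
    intro h
    have : ga ∈ F ∩ incE G a := Finset.mem_inter.mpr ⟨h, hgai⟩
    rw [hFa] at this
    exact hfaga (Finset.mem_singleton.mp this).symm
  have hgaD : ga ∈ EF G \ (F ∪ X) := Finset.mem_sdiff.mpr
    ⟨incE_subset_EF hgai, Finset.notMem_union.mpr ⟨hganF, haX _ hgai⟩⟩
  have hgaE : ga ∈ EF G := (Finset.mem_sdiff.mp hgaD).1
  -- other endpoint z of ga
  obtain ⟨z, hgaz, hadjaz, haz⟩ := edge_other ((mem_incE G).mp hgai).1 hmem_ga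
  have hmem_gaz : z ∈ ga := by rw [hgaz]; simp
  have hzu : z ≠ u := by
    intro h
    subst h
    apply he1ga
    rw [he1a, hgaz, Sym2.eq_swap]
  have hgaiz : ga ∈ incE G z := by
    rw [mem_incE G]
    exact ⟨(mem_EF G).mp hgaE, hmem_gaz⟩
  have hzsat := hsat z ⟨ga, Finset.mem_inter.mpr ⟨hgaD, hgaiz⟩⟩
  obtain ⟨hz3, hzX, hfzle⟩ := hzsat
  -- split at w
  obtain ⟨s1, s2, hsplitw, hs12, he2s1, he2s2⟩ := three_split hw3 he2iw
  have hs1i : s1 ∈ incE G w := by rw [hsplitw]; simp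
  have hs2i : s2 ∈ incE G w := by rw [hsplitw]; simp
  have hmem_s1 : w ∈ s1 := ((mem_incE G).mp hs1i).2
  have hmem_s2 : w ∈ s2 := ((mem_incE G).mp hs2i).2
  have hs1D : s1 ∈ EF G \ (F ∪ X) := by
    refine Finset.mem_sdiff.mpr ⟨incE_subset_EF hs1i, Finset.notMem_union.mpr ⟨?_, hwX _ hs1i⟩⟩
    intro h
    have : s1 ∈ F ∩ incE G w := Finset.mem_inter.mpr ⟨h, hs1i⟩
    rw [hfw0] at this; exact absurd this (Finset.notMem_empty _)
  have hs2D : s2 ∈ EF G \ (F ∪ X) := by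
    refine Finset.mem_sdiff.mpr ⟨incE_subset_EF hs2i, Finset.notMem_union.mpr ⟨?_, hwX _ hs2i⟩⟩
    intro h
    have : s2 ∈ F ∩ incE G w := Finset.mem_inter.mpr ⟨h, hs2i⟩
    rw [hfw0] at this; exact absurd this (Finset.notMem_empty _)
  -- basic distinctness
  have hgae2 : ga ≠ e2 := edge_ne_of_mem hmem_ga (he2w ▸ not_mem_edge hua.symm haw)
  have hnz_e1 : z ∉ e1 := he1a ▸ not_mem_edge hzu (fun h => haz h.symm)
  by_cases hfz1 : (F ∩ incE G z).card = 1
  · -- (A) : z has a forced edge; branch on e1 with gains (4,4)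
    obtain ⟨fz, hFz⟩ := Finset.card_eq_one.mp hfz1
    have hzw : z ≠ w := by
      intro h
      rw [h, hfw0] at hFz
      exact absurd hFz.symm (Finset.singleton_ne_empty fz)
    have hfzF : fz ∈ F := by
      have : fz ∈ F ∩ incE G z := by rw [hFz]; simp
      exact (Finset.mem_inter.mp this).1
    have hfzi : fz ∈ incE G z := by
      have : fz ∈ F ∩ incE G z := by rw [hFz]; simp
      exact (Finset.mem_inter.mp this).2
    have hgafz : ga ≠ fz := fun h => hganF (h ▸ hfzF)
    obtain ⟨tz, hsplitz, hgatz, hfztz⟩ := three_split_two hz3 hgaiz hfzi hgafz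
    have htzi : tz ∈ incE G z := by rw [hsplitz]; simp
    have hmem_tz : z ∈ tz := ((mem_incE G).mp htzi).2
    have htznF : tz ∉ F := by
      intro h
      have : tz ∈ F ∩ incE G z := Finset.mem_inter.mpr ⟨h, htzi⟩
      rw [hFz] at this
      exact hfztz (Finset.mem_singleton.mp this).symm
    have htzD : tz ∈ EF G \ (F ∪ X) := Finset.mem_sdiff.mpr
      ⟨incE_subset_EF htzi, Finset.notMem_union.mpr ⟨htznF, hzX _ htzi⟩⟩
    have htze1 : tz ≠ e1 := edge_ne_of_mem hmem_tz hnz_e1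
    have htze2 : tz ≠ e2 := edge_ne_of_mem hmem_tz (he2w ▸ not_mem_edge hzu hzw)
    have himp1 : ∀ C, Ok G F X C → e1 ∈ C →
        Ok G (insert e1 (insert tz (insert s1 (insert s2 F)))) (insert e2 (insert ga X)) C := by
      intro C hC he1C
      obtain ⟨hHam, hFC, hdisj⟩ := hC
      have h2u := ham_two hHam u
      have h2a := ham_two hHam a
      have h2w := ham_two hHam w
      have h2z := ham_two hHam z
      have hfuC : fu ∈ C := hFC hfuF
      have hfaC : fa ∈ C := hFC hfaF
      have he2nC : e2 ∉ C :=
        H1 h2u hfuC he1C hf1 hfuiu he1iu he2iu hf2.symm h12.symm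
      have hganC : ga ∉ C :=
        H1 h2a hfaC he1C (fun h => he1fa h.symm) hfai he1ia hgai hfaga.symm he1ga.symm
      have htzC : tz ∈ C := (H2 h2z (le_of_eq hsplitz) hganC hfztz).2
      have hsC := H2 h2w (le_of_eq hsplitw) he2nC hs12
      refine ⟨hHam, ?_, ?_⟩
      · exact Finset.insert_subset he1C (Finset.insert_subset htzC
          (Finset.insert_subset hsC.1 (Finset.insert_subset hsC.2 hFC)))
      · rw [Finset.disjoint_insert_right, Finset.disjoint_insert_right]
        exact ⟨he2nC, hganC, hdisj⟩
    have himp2 : ∀ C, Ok G F X C → e1 ∉ C →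
        Ok G (insert e2 (insert ga F)) (insert e1 (insert tz X)) C := by
      intro C hC he1nC
      obtain ⟨hHam, hFC, hdisj⟩ := hC
      have h2u := ham_two hHam u
      have h2a := ham_two hHam a
      have h2z := ham_two hHam z
      have hfzC : fz ∈ C := hFC hfzF
      have he2C : e2 ∈ C := (H2 h2u hsubu he1nC hf2).2
      have hgaC : ga ∈ C := (H2 h2a (le_of_eq hsplita) he1nC hfaga).2
      have htznC : tz ∉ C :=
        H1 h2z hfzC hgaC (fun h => hgafz h.symm) hfzi hgaiz htzi hfztz.symm hgatz.symm
      refine ⟨hHam, Finset.insert_subset he2C (Finset.insert_subset hgaC hFC), ?_⟩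
      rw [Finset.disjoint_insert_right, Finset.disjoint_insert_right]
      exact ⟨he1nC, htznC, hdisj⟩
    have hcard : ({e1, e2, ga, tz} : Finset (Sym2 V)).card = 4 :=
      card_four h12 he1ga htze1.symm hgae2.symm htze2.symm hgatz
    have hstep := NC_step2 (g₁ := 4) (g₂ := 4)
      (New₁ := {e1, e2, ga, tz}) (New₂ := {e1, e2, ga, tz}) e1 IH hU himp1 himp2
      (by simp) (by simp)
      (Finset.insert_subset he1E (Finset.insert_subset (incE_subset_EF htzi)
        (Finset.insert_subset (incE_subset_EF hs1i)
          (Finset.insert_subset (incE_subset_EF hs2i) hFE))))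
      (Finset.insert_subset he2E (Finset.insert_subset hgaE hXE))
      (Finset.insert_subset he2E (Finset.insert_subset hgaE hFE))
      (Finset.insert_subset he1E (Finset.insert_subset (incE_subset_EF htzi) hXE))
      (by intro x hx; simp only [Finset.mem_insert, Finset.mem_singleton] at hx
          rcases hx with rfl | rfl | rfl | rfl
          exacts [he1D, he2D, hgaD, htzD])
      (by intro x hx; simp only [Finset.mem_insert, Finset.mem_singleton] at hx
          rcases hx with rfl | rfl | rfl | rfl <;> simp)
      (by intro x hx; rcases Finset.mem_union.mp hx with h | h <;> simp [h])
      (by intro x hx; simp only [Finset.mem_insert, Finset.mem_singleton] at hx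
          rcases hx with rfl | rfl | rfl | rfl
          exacts [he1D, he2D, hgaD, htzD])
      (by intro x hx; simp only [Finset.mem_insert, Finset.mem_singleton] at hx
          rcases hx with rfl | rfl | rfl | rfl <;> simp)
      (by intro x hx; rcases Finset.mem_union.mp hx with h | h <;> simp [h])
      (le_of_eq hcard.symm) (le_of_eq hcard.symm) (by norm_num) (by norm_num)
    obtain ⟨hstep', hU4, _⟩ := hstep
    calc (NC G F X : ℝ) ≤ B (U - 4) + B (U - 4) := hstep'
      _ ≤ B U := rec44 hU4
  · -- (B) : z is F-free; branch on ga with gains (3,6) (or one-sided if z = w)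
    have hfz0 : F ∩ incE G z = ∅ := by
      have : (F ∩ incE G z).card = 0 := by omega
      exact Finset.card_eq_zero.mp this
    obtain ⟨t1, t2, hsplitz, ht12, hgat1, hgat2⟩ := three_split hz3 hgaiz
    have ht1i : t1 ∈ incE G z := by rw [hsplitz]; simp
    have ht2i : t2 ∈ incE G z := by rw [hsplitz]; simp
    have hmem_t1 : z ∈ t1 := ((mem_incE G).mp ht1i).2
    have hmem_t2 : z ∈ t2 := ((mem_incE G).mp ht2i).2
    have ht1D : t1 ∈ EF G \ (F ∪ X) := by
      refine Finset.mem_sdiff.mpr ⟨incE_subset_EF ht1i, Finset.notMem_union.mpr ⟨?_, hzX _ ht1i⟩⟩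
      intro h
      have : t1 ∈ F ∩ incE G z := Finset.mem_inter.mpr ⟨h, ht1i⟩
      rw [hfz0] at this; exact absurd this (Finset.notMem_empty _)
    have ht2D : t2 ∈ EF G \ (F ∪ X) := by
      refine Finset.mem_sdiff.mpr ⟨incE_subset_EF ht2i, Finset.notMem_union.mpr ⟨?_, hzX _ ht2i⟩⟩
      intro h
      have : t2 ∈ F ∩ incE G z := Finset.mem_inter.mpr ⟨h, ht2i⟩
      rw [hfz0] at this; exact absurd this (Finset.notMem_empty _)
    have hsuba : incE G a ⊆ {ga, fa, e1} := by
      rw [hsplita]; intro x hx; simp only [Finset.mem_insert, Finset.mem_singleton] at hx ⊢; tauto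
    have hfae1 : fa ≠ e1 := fun h => he1fa h.symm
    -- common include-side implication (ga ∈ C)
    have himp1 : ∀ C, Ok G F X C → ga ∈ C →
        Ok G (insert ga (insert e2 F)) (insert e1 X) C := by
      intro C hC hgaC
      obtain ⟨hHam, hFC, hdisj⟩ := hC
      have h2u := ham_two hHam u
      have h2a := ham_two hHam a
      have hfaC : fa ∈ C := hFC hfaF
      have he1nC : e1 ∉ C :=
        H1 h2a hfaC hgaC hfaga hfai hgai he1ia he1fa he1ga
      have he2C : e2 ∈ C := (H2 h2u hsubu he1nC hf2).2
      refine ⟨hHam, Finset.insert_subset hgaC (Finset.insert_subset he2C hFC), ?_⟩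
      rw [Finset.disjoint_insert_right]
      exact ⟨he1nC, hdisj⟩
    by_cases hzw : z = w
    · -- degenerate : the exclude side is empty; single move with gain 3
      subst hzw
      -- here incE w contains both e2 and ga
      have hgae2' : e2 ≠ ga := fun h => hgae2 h.symm
      obtain ⟨r, hsplitw', _, _⟩ := three_split_two hw3 he2iw hgaiz hgae2'
      have himp : ∀ C, Ok G F X C → Ok G (insert ga (insert e2 F)) (insert e1 X) C := by
        intro C hC
        by_cases hgaC : ga ∈ C
        · exact himp1 C hC hgaC
        · exfalso
          obtain ⟨hHam, hFC, hdisj⟩ := hC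
          have h2u := ham_two hHam u
          have h2a := ham_two hHam a
          have h2w := ham_two hHam z
          have he1C : e1 ∈ C := (H2 h2a hsuba hgaC hfae1).2
          have he2nC : e2 ∉ C :=
            H1 h2u (hFC hfuF) he1C hf1 hfuiu he1iu he2iu hf2.symm h12.symm
          exact H0 h2w (le_of_eq hsplitw') he2nC hgaC
      have hstep := NC_step1 (g₂ := 3) (New₂ := {ga, e1, e2}) IH hU himp
        (by simp)
        (Finset.insert_subset hgaE (Finset.insert_subset he2E hFE))
        (Finset.insert_subset he1E hXE)
        (by intro x hx; simp only [Finset.mem_insert, Finset.mem_singleton] at hx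
            rcases hx with rfl | rfl | rfl
            exacts [hgaD, he1D, he2D])
        (by intro x hx; simp only [Finset.mem_insert, Finset.mem_singleton] at hx
            rcases hx with rfl | rfl | rfl <;> simp)
        (by intro x hx; rcases Finset.mem_union.mp hx with h | h <;> simp [h])
        (le_of_eq (card_three (fun h => he1ga h.symm) hgae2 h12).symm) (by norm_num)
      calc (NC G F X : ℝ) ≤ B (U - 3) := hstep
        _ ≤ B U := B_mono (by omega)
    · -- main (3,6) branching on ga
      have himp2 : ∀ C, Ok G F X C → ga ∉ C →
          Ok G (insert e1 (insert s1 (insert s2 (insert t1 (insert t2 F)))))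
            (insert ga (insert e2 X)) C := by
        intro C hC hganC
        obtain ⟨hHam, hFC, hdisj⟩ := hC
        have h2u := ham_two hHam u
        have h2a := ham_two hHam a
        have h2w := ham_two hHam w
        have h2z := ham_two hHam z
        have hfuC : fu ∈ C := hFC hfuF
        have haC := H2 h2a hsuba hganC hfae1
        have he1C : e1 ∈ C := haC.2
        have he2nC : e2 ∉ C :=
          H1 h2u hfuC he1C hf1 hfuiu he1iu he2iu hf2.symm h12.symm
        have hsC := H2 h2w (le_of_eq hsplitw) he2nC hs12
        have htC := H2 h2z (le_of_eq hsplitz) hganC ht12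
        refine ⟨hHam, ?_, ?_⟩
        · exact Finset.insert_subset he1C (Finset.insert_subset hsC.1
            (Finset.insert_subset hsC.2 (Finset.insert_subset htC.1
              (Finset.insert_subset htC.2 hFC))))
        · rw [Finset.disjoint_insert_right, Finset.disjoint_insert_right]
          exact ⟨hganC, he2nC, hdisj⟩
      -- cardinality of New₂
      have hbase : ({ga, e1, e2} : Finset (Sym2 V)).card = 3 :=
        card_three (fun h => he1ga h.symm) hgae2 h12
      have hs_ne_ga : ∀ x, w ∈ x → x ≠ ga := fun x hx =>
        edge_ne_of_mem hx (hgaz ▸ not_mem_edge haw.symm (fun h => hzw h.symm))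
      have hs_ne_e1 : ∀ x, w ∈ x → x ≠ e1 := fun x hx =>
        edge_ne_of_mem hx (he1a ▸ not_mem_edge huw.symm haw.symm)
      have ht_ne_ga1 : t1 ≠ ga := fun h => hgat1 h.symm
      have ht_ne_ga2 : t2 ≠ ga := fun h => hgat2 h.symm
      have ht_ne_e1 : ∀ x, z ∈ x → x ≠ e1 := fun x hx => edge_ne_of_mem hx hnz_e1
      have ht_ne_e2 : ∀ x, z ∈ x → x ≠ e2 := fun x hx =>
        edge_ne_of_mem hx (he2w ▸ not_mem_edge hzu hzw)
      have hdisj_base : Disjoint ({ga, e1, e2} : Finset (Sym2 V)) ({s1, s2} ∪ {t1, t2}) := by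
        rw [Finset.disjoint_right]
        intro x hx
        simp only [Finset.mem_union, Finset.mem_insert, Finset.mem_singleton] at hx ⊢
        push_neg
        rcases hx with (rfl | rfl) | (rfl | rfl)
        · exact ⟨hs_ne_ga _ hmem_s1, hs_ne_e1 _ hmem_s1, fun h => he2s1 h.symm⟩
        · exact ⟨hs_ne_ga _ hmem_s2, hs_ne_e1 _ hmem_s2, fun h => he2s2 h.symm⟩
        · exact ⟨ht_ne_ga1, ht_ne_e1 _ hmem_t1, ht_ne_e2 _ hmem_t1⟩
        · exact ⟨ht_ne_ga2, ht_ne_e1 _ hmem_t2, ht_ne_e2 _ hmem_t2⟩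
      have hinter : ({s1, s2} : Finset (Sym2 V)) ∩ {t1, t2} ⊆ {s(w, z)} := by
        intro x hx
        rw [Finset.mem_inter] at hx
        have hwx : w ∈ x := by
          rcases Finset.mem_insert.mp hx.1 with rfl | h
          · exact hmem_s1
          · rw [Finset.mem_singleton] at h; subst h; exact hmem_s2
        have hzx : z ∈ x := by
          rcases Finset.mem_insert.mp hx.2 with rfl | h
          · exact hmem_t1
          · rw [Finset.mem_singleton] at h; subst h; exact hmem_t2
        rw [Finset.mem_singleton]
        exact sym2_eq_of_two_mem hwx hzx (fun h => hzw h.symm)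
      have hcard2 : 6 ≤ (({ga, e1, e2} : Finset (Sym2 V)) ∪ ({s1, s2} ∪ {t1, t2})).card := by
        rw [Finset.card_union_of_disjoint hdisj_base]
        have h1 : ({s1, s2} : Finset (Sym2 V)).card = 2 := by
          rw [Finset.card_insert_of_notMem (by simp [hs12]), Finset.card_singleton]
        have h2 : ({t1, t2} : Finset (Sym2 V)).card = 2 := by
          rw [Finset.card_insert_of_notMem (by simp [ht12]), Finset.card_singleton]
        have h3 := Finset.card_union_add_card_inter ({s1, s2} : Finset (Sym2 V)) {t1, t2}
        have h4 : (({s1, s2} : Finset (Sym2 V)) ∩ {t1, t2}).card ≤ 1 := by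
          calc _ ≤ ({s(w, z)} : Finset (Sym2 V)).card := Finset.card_le_card hinter
            _ = 1 := Finset.card_singleton _
        rw [hbase]
        omega
      have hstep := NC_step2 (g₁ := 3) (g₂ := 6)
        (New₁ := {ga, e1, e2}) (New₂ := {ga, e1, e2} ∪ ({s1, s2} ∪ {t1, t2})) ga IH hU
        himp1 himp2
        (by simp) (by simp)
        (Finset.insert_subset hgaE (Finset.insert_subset he2E hFE))
        (Finset.insert_subset he1E hXE)
        (Finset.insert_subset he1E (Finset.insert_subset (incE_subset_EF hs1i)
          (Finset.insert_subset (incE_subset_EF hs2i)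
            (Finset.insert_subset (incE_subset_EF ht1i)
              (Finset.insert_subset (incE_subset_EF ht2i) hFE)))))
        (Finset.insert_subset hgaE (Finset.insert_subset he2E hXE))
        (by intro x hx; simp only [Finset.mem_insert, Finset.mem_singleton] at hx
            rcases hx with rfl | rfl | rfl
            exacts [hgaD, he1D, he2D])
        (by intro x hx; simp only [Finset.mem_insert, Finset.mem_singleton] at hx
            rcases hx with rfl | rfl | rfl <;> simp)
        (by intro x hx; rcases Finset.mem_union.mp hx with h | h <;> simp [h])
        (by intro x hx
            simp only [Finset.mem_union, Finset.mem_insert, Finset.mem_singleton] at hx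
            rcases hx with (rfl | rfl | rfl) | (rfl | rfl) | (rfl | rfl)
            exacts [hgaD, he1D, he2D, hs1D, hs2D, ht1D, ht2D])
        (by intro x hx
            simp only [Finset.mem_union, Finset.mem_insert, Finset.mem_singleton] at hx
            rcases hx with (rfl | rfl | rfl) | (rfl | rfl) | (rfl | rfl) <;> simp)
        (by intro x hx; rcases Finset.mem_union.mp hx with h | h <;> simp [h])
        (le_of_eq hbase.symm) hcard2 (by norm_num) (by norm_num)
      obtain ⟨hstep', _, hU6⟩ := hstep
      calc (NC G F X : ℝ) ≤ B (U - 3) + B (U - 6) := hstep'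
        _ ≤ B U := rec36 hU6

end warm

/-- main induction -/
lemma main_ind (hdeg : ∀ v, (G.neighborSet v).ncard ≤ 3) :
    ∀ U : ℕ, ∀ F X : Finset (Sym2 V), (F ∪ X).Nonempty →
      F ⊆ EF G → X ⊆ EF G → (EF G \ (F ∪ X)).card ≤ U →
      (NC G F X : ℝ) ≤ B U := by
  intro U
  induction U using Nat.strong_induction_on with
  | _ U IH =>
  intro F X hne hFE hXE hU
  classical
  by_cases hU0 : EF G \ (F ∪ X) = ∅
  · have hle : NC G F X ≤ 1 := by
      apply NC_le_one
      have huniq : ∀ C, Ok G F X C → C = F := by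
        intro C hC
        apply Finset.Subset.antisymm _ hC.2.1
        intro e he
        have heE : e ∈ EF G := ham_sub hC.1 he
        have hFX : e ∈ F ∪ X := by
          by_contra hcon
          have : e ∈ EF G \ (F ∪ X) := Finset.mem_sdiff.mpr ⟨heE, hcon⟩
          rw [hU0] at this
          exact absurd this (Finset.notMem_empty _)
        rcases Finset.mem_union.mp hFX with h | h
        · exact h
        · exact absurd h (Finset.disjoint_left.mp hC.2.2 he)
      intro C₁ C₂ h₁ h₂
      rw [huniq C₁ h₁, huniq C₂ h₂]
    calc (NC G F X : ℝ) ≤ 1 := by exact_mod_cast hle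
      _ ≤ B U := one_le_B U
  by_cases h1 : ∃ v : V, (incE G v \ X).card ≤ 1
  · obtain ⟨v, hv⟩ := h1
    have hzero : NC G F X = 0 := by
      apply NC_zero
      intro C hC
      have h2 := ham_two hC.1 v
      have hsub : C ∩ incE G v ⊆ incE G v \ X := by
        intro e he
        have := Finset.mem_inter.mp he
        exact Finset.mem_sdiff.mpr ⟨this.2, fun hx => Finset.disjoint_left.mp hC.2.2 this.1 hx⟩
      have := Finset.card_le_card hsub
      omega
    rw [hzero]
    calc ((0:ℕ) : ℝ) = 0 := by norm_num
      _ ≤ B U := le_of_lt (B_pos U)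
  by_cases h2 : ∃ v : V, 3 ≤ (F ∩ incE G v).card
  · obtain ⟨v, hv⟩ := h2
    have hzero : NC G F X = 0 := by
      apply NC_zero
      intro C hC
      have h2' := ham_two hC.1 v
      have hsub : F ∩ incE G v ⊆ C ∩ incE G v :=
        Finset.inter_subset_inter hC.2.1 (Finset.Subset.refl _)
      have := Finset.card_le_card hsub
      omega
    rw [hzero]
    calc ((0:ℕ) : ℝ) = 0 := by norm_num
      _ ≤ B U := le_of_lt (B_pos U)
  by_cases h3 : ∃ v : V, ∃ e, (F ∩ incE G v).card = 2 ∧ e ∈ EF G \ (F ∪ X) ∧ e ∈ incE G v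
  · obtain ⟨v, e, hv2, heD, hei⟩ := h3
    have heD' := Finset.mem_sdiff.mp heD
    have himp : ∀ C, Ok G F X C → Ok G F (insert e X) C := by
      intro C hC
      refine ⟨hC.1, hC.2.1, ?_⟩
      rw [Finset.disjoint_insert_right]
      refine ⟨?_, hC.2.2⟩
      intro heC
      have h2' := ham_two hC.1 v
      have hsub : F ∩ incE G v ⊆ C ∩ incE G v :=
        Finset.inter_subset_inter hC.2.1 (Finset.Subset.refl _)
      have heq : F ∩ incE G v = C ∩ incE G v :=
        Finset.eq_of_subset_of_card_le hsub (by omega)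
      have : e ∈ F ∩ incE G v := heq ▸ Finset.mem_inter.mpr ⟨heC, hei⟩
      exact (Finset.notMem_union.mp heD'.2).1 (Finset.mem_inter.mp this).1
    have hgain : (EF G \ (F ∪ insert e X)).card + 1 ≤ (EF G \ (F ∪ X)).card := by
      have := gain_card (E := EF G) (F := F) (X := X) (F' := F) (X' := insert e X)
        (New := {e}) (by simp [heD]) (by simp) (by intro x hx; simp at hx ⊢; tauto)
      simpa using this
    have hrec := IH (U - 1) (by omega) F (insert e X)
      (by simp [Finset.insert_nonempty]) hFE
      (Finset.insert_subset heD'.1 hXE) (by omega)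
    calc (NC G F X : ℝ) ≤ (NC G F (insert e X) : ℝ) := by exact_mod_cast NC_mono himp
      _ ≤ B (U - 1) := hrec
      _ ≤ B U := B_mono (by omega)
  by_cases h4 : ∃ v : V, ∃ e, (incE G v \ X).card = 2 ∧ e ∈ EF G \ (F ∪ X) ∧ e ∈ incE G v
  · obtain ⟨v, e, hv2, heD, hei⟩ := h4
    have heD' := Finset.mem_sdiff.mp heD
    have himp : ∀ C, Ok G F X C → Ok G (insert e F) X C := by
      intro C hC
      refine ⟨hC.1, ?_, hC.2.2⟩
      rw [Finset.insert_subset_iff]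
      refine ⟨?_, hC.2.1⟩
      have h2' := ham_two hC.1 v
      have hsub : C ∩ incE G v ⊆ incE G v \ X := by
        intro x hx
        have := Finset.mem_inter.mp hx
        exact Finset.mem_sdiff.mpr ⟨this.2, fun h => Finset.disjoint_left.mp hC.2.2 this.1 h⟩
      have heq : C ∩ incE G v = incE G v \ X :=
        Finset.eq_of_subset_of_card_le hsub (by omega)
      have : e ∈ incE G v \ X :=
        Finset.mem_sdiff.mpr ⟨hei, (Finset.notMem_union.mp heD'.2).2⟩
      rw [← heq] at this
      exact (Finset.mem_inter.mp this).1
    have hgain : (EF G \ (insert e F ∪ X)).card + 1 ≤ (EF G \ (F ∪ X)).card := by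
      have := gain_card (E := EF G) (F := F) (X := X) (F' := insert e F) (X' := X)
        (New := {e}) (by simp [heD]) (by simp) (by intro x hx; simp at hx ⊢; tauto)
      simpa using this
    have hrec := IH (U - 1) (by omega) (insert e F) X
      (by simp [Finset.insert_nonempty]) (Finset.insert_subset heD'.1 hFE) hXE (by omega)
    calc (NC G F X : ℝ) ≤ (NC G (insert e F) X : ℝ) := by exact_mod_cast NC_mono himp
      _ ≤ B (U - 1) := hrec
      _ ≤ B U := B_mono (by omega)
  by_cases h5 : ∃ u : V, (F ∩ incE G u).card = 1 ∧ ((EF G \ (F ∪ X)) ∩ incE G u).Nonempty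
  · -- WARM
    obtain ⟨u, hfu1, hDu⟩ := h5
    push_neg at h1 h2 h3 h4
    have hsat : ∀ v : V, ((EF G \ (F ∪ X)) ∩ incE G v).Nonempty →
        (incE G v).card = 3 ∧ (∀ f ∈ incE G v, f ∉ X) ∧ (F ∩ incE G v).card ≤ 1 := by
      intro v ⟨e, he⟩
      have he' := Finset.mem_inter.mp he
      have hge2 : 1 < (incE G v \ X).card := h1 v
      have hle3 : (incE G v).card ≤ 3 := card_incE_le hdeg v
      have hsub : incE G v \ X ⊆ incE G v := Finset.sdiff_subset
      have hle3' : (incE G v \ X).card ≤ 3 := le_trans (Finset.card_le_card hsub) hle3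
      have hne2 : (incE G v \ X).card ≠ 2 := by
        intro hcon
        exact h4 v e hcon he'.1 he'.2
      have hav3 : (incE G v \ X).card = 3 := by omega
      have hinc3 : (incE G v).card = 3 := by
        have := Finset.card_le_card hsub
        omega
      have heqav : incE G v \ X = incE G v :=
        Finset.eq_of_subset_of_card_le hsub (by omega)
      refine ⟨hinc3, ?_, ?_⟩
      · intro f hf
        rw [← heqav] at hf
        exact (Finset.mem_sdiff.mp hf).2
      · have hlt := h2 v
        have hne2' : (F ∩ incE G v).card ≠ 2 := by
          intro hcon
          exact h3 v e hcon he'.1 he'.2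
        omega
    obtain ⟨hu3, huX, _⟩ := hsat u hDu
    obtain ⟨fu, hFu⟩ := Finset.card_eq_one.mp hfu1
    have hfuF : fu ∈ F := by
      have : fu ∈ F ∩ incE G u := by rw [hFu]; simp
      exact (Finset.mem_inter.mp this).1
    have hfuiu : fu ∈ incE G u := by
      have : fu ∈ F ∩ incE G u := by rw [hFu]; simp
      exact (Finset.mem_inter.mp this).2
    obtain ⟨e1, e2, hsplitu, h12, hf1, hf2⟩ := three_split hu3 hfuiu
    have he1iu : e1 ∈ incE G u := by rw [hsplitu]; simp
    have he2iu : e2 ∈ incE G u := by rw [hsplitu]; simp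
    have he1nF : e1 ∉ F := by
      intro h
      have : e1 ∈ F ∩ incE G u := Finset.mem_inter.mpr ⟨h, he1iu⟩
      rw [hFu] at this
      exact hf1 (Finset.mem_singleton.mp this).symm
    have he2nF : e2 ∉ F := by
      intro h
      have : e2 ∈ F ∩ incE G u := Finset.mem_inter.mpr ⟨h, he2iu⟩
      rw [hFu] at this
      exact hf2 (Finset.mem_singleton.mp this).symm
    have he1D : e1 ∈ EF G \ (F ∪ X) := Finset.mem_sdiff.mpr
      ⟨incE_subset_EF he1iu, Finset.notMem_union.mpr ⟨he1nF, huX _ he1iu⟩⟩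
    have he2D : e2 ∈ EF G \ (F ∪ X) := Finset.mem_sdiff.mpr
      ⟨incE_subset_EF he2iu, Finset.notMem_union.mpr ⟨he2nF, huX _ he2iu⟩⟩
    obtain ⟨a, he1a, hadjua, hua⟩ := edge_other ((mem_incE G).mp he1iu).1 ((mem_incE G).mp he1iu).2
    obtain ⟨w, he2w, hadjuw, huw⟩ := edge_other ((mem_incE G).mp he2iu).1 ((mem_incE G).mp he2iu).2
    have haw : a ≠ w := by
      intro h
      subst h
      rw [he1a, ← he2w] at h12
      exact h12 rfl
    have he1ia : e1 ∈ incE G a := by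
      rw [mem_incE G]
      exact ⟨((mem_incE G).mp he1iu).1, by rw [he1a]; simp⟩
    have he2iw : e2 ∈ incE G w := by
      rw [mem_incE G]
      exact ⟨((mem_incE G).mp he2iu).1, by rw [he2w]; simp⟩
    obtain ⟨ha3, haX, hfaLe⟩ := hsat a ⟨e1, Finset.mem_inter.mpr ⟨he1D, he1ia⟩⟩
    obtain ⟨hw3, hwX, hfwLe⟩ := hsat w ⟨e2, Finset.mem_inter.mpr ⟨he2D, he2iw⟩⟩
    by_cases hfa : (F ∩ incE G a).card = 1
    · by_cases hfw : (F ∩ incE G w).card = 1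
      · -- (1,1)
        obtain ⟨fa, hFa⟩ := Finset.card_eq_one.mp hfa
        obtain ⟨fw, hFw⟩ := Finset.card_eq_one.mp hfw
        exact warm11 IH hU hFE hXE hfuF hsplitu h12 hf1 hf2 he1a he2w hua huw haw
          he1D he2D ha3 haX hw3 hwX hFa hFw
      · -- (1,0)
        obtain ⟨fa, hFa⟩ := Finset.card_eq_one.mp hfa
        have hfw0 : F ∩ incE G w = ∅ := Finset.card_eq_zero.mp (by omega)
        exact warm10 IH hU hFE hXE hsat hfuF hsplitu h12 hf1 hf2 he1a he2w hua huw haw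
          he1D he2D ha3 haX hw3 hwX hFa hfw0
    · by_cases hfw : (F ∩ incE G w).card = 1
      · -- (0,1) : apply warm10 with roles of e1/e2 swapped
        obtain ⟨fw, hFw⟩ := Finset.card_eq_one.mp hfw
        have hfa0 : F ∩ incE G a = ∅ := Finset.card_eq_zero.mp (by omega)
        have hsplitu' : incE G u = {fu, e2, e1} := by
          rw [hsplitu]
          ext x
          simp only [Finset.mem_insert, Finset.mem_singleton]
          tauto
        exact warm10 IH hU hFE hXE hsat hfuF hsplitu' h12.symm hf2 hf1 he2w he1a huw hua
          haw.symm he2D he1D hw3 hwX ha3 haX hFw hfa0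
      · -- (0,0)
        have hfa0 : F ∩ incE G a = ∅ := Finset.card_eq_zero.mp (by omega)
        have hfw0 : F ∩ incE G w = ∅ := Finset.card_eq_zero.mp (by omega)
        exact warm00 IH hU hFE hXE hfuF hsplitu h12 hf1 hf2 he1a he2w hua huw haw
          he1D he2D ha3 haX hw3 hwX hfa0 hfw0
  -- CASE 6 : closure
  · push_neg at h1 h2 h3 h4 h5
    have hF2 : ∀ v, (F ∩ incE G v).card = 0 ∨ (F ∩ incE G v).card = 2 := by
      intro v
      have hlt := h2 v
      have hcase : (F ∩ incE G v).card = 0 ∨ (F ∩ incE G v).card = 1 ∨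
          (F ∩ incE G v).card = 2 := by omega
      rcases hcase with h | h | h
      · exact Or.inl h
      · exfalso
        have hnoundec : ¬ ((EF G \ (F ∪ X)) ∩ incE G v).Nonempty := fun hcon => by
          have := h5 v h
          rw [this] at hcon
          exact absurd hcon (by simp [Finset.not_nonempty_empty])
        have havail : 2 ≤ (incE G v \ X).card := h1 v
        have hsubF : incE G v \ X ⊆ F ∩ incE G v := by
          intro e he
          have he' := Finset.mem_sdiff.mp he
          by_cases heF : e ∈ F
          · exact Finset.mem_inter.mpr ⟨heF, he'.1⟩
          · exfalso
            apply hnoundec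
            exact ⟨e, Finset.mem_inter.mpr ⟨Finset.mem_sdiff.mpr ⟨incE_subset_EF he'.1,
              Finset.notMem_union.mpr ⟨heF, he'.2⟩⟩, he'.1⟩⟩
        have := Finset.card_le_card hsubF
        omega
      · exact Or.inr h
    have hFne : F.Nonempty := by
      by_contra hFe
      rw [Finset.not_nonempty_iff_eq_empty] at hFe
      subst hFe
      obtain ⟨e, heX⟩ : X.Nonempty := by simpa using hne
      have heE : e ∈ EF G := hXE heX
      obtain ⟨x, y, hxy⟩ : ∃ x y, e = s(x, y) := by
        induction e using Sym2.ind with | h x y => exact ⟨x, y, rfl⟩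
      have hex : e ∈ incE G x := by
        rw [mem_incE G]
        refine ⟨(mem_EF G).mp heE, ?_⟩
        rw [hxy]; simp
      have havail2 : (incE G x \ X).card ≤ 2 := by
        have hsub : incE G x \ X ⊆ (incE G x).erase e := by
          intro f hf
          have hf' := Finset.mem_sdiff.mp hf
          exact Finset.mem_erase.mpr ⟨fun h => hf'.2 (h ▸ heX), hf'.1⟩
        have h1' := Finset.card_le_card hsub
        have h2' : ((incE G x).erase e).card = (incE G x).card - 1 :=
          Finset.card_erase_of_mem hex
        have h3' := card_incE_le hdeg x
        omega
      have havail2' : (incE G x \ X).card = 2 := by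
        have := h1 x
        omega
      have hsubF : incE G x \ X ⊆ (∅ : Finset (Sym2 V)) := by
        intro f hf
        have hf' := Finset.mem_sdiff.mp hf
        exfalso
        exact h4 x f havail2' (Finset.mem_sdiff.mpr ⟨incE_subset_EF hf'.1,
          Finset.notMem_union.mpr ⟨Finset.notMem_empty f, hf'.2⟩⟩) hf'.1
      have hempty := Finset.subset_empty.mp hsubF
      rw [hempty] at havail2'
      simp at havail2'
    have hle : NC G F X ≤ 1 := by
      apply NC_le_one
      have huniq : ∀ C, Ok G F X C → C = F := by
        intro C hC
        exact Finset.Subset.antisymm (closure_lemma hC.1 hC.2.1 hF2 hFne) hC.2.1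
      intro C₁ C₂ hh₁ hh₂
      rw [huniq C₁ hh₁, huniq C₂ hh₂]
    calc (NC G F X : ℝ) ≤ 1 := by exact_mod_cast hle
      _ ≤ B U := one_le_B U

/-- root bound : no constraints -/
lemma root_bound (hdeg : ∀ v, (G.neighborSet v).ncard ≤ 3) :
    (NC G ∅ ∅ : ℝ) ≤ 2 * B (EF G).card := by
  classical
  by_cases hE : (EF G : Finset (Sym2 V)) = ∅
  · have hle : NC G ∅ ∅ ≤ 1 := by
      apply NC_le_one
      have huniq : ∀ C, Ok G ∅ ∅ C → C = ∅ := by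
        intro C hC
        have := ham_sub hC.1
        rw [hE] at this
        exact Finset.subset_empty.mp this
      intro C₁ C₂ h₁ h₂
      rw [huniq C₁ h₁, huniq C₂ h₂]
    have h1B := one_le_B (EF G).card
    calc (NC G ∅ ∅ : ℝ) ≤ 1 := by exact_mod_cast hle
      _ ≤ 2 * B (EF G).card := by linarith
  · obtain ⟨e₀, he₀⟩ := Finset.nonempty_iff_ne_empty.mpr hE
    have hbr := NC_branch (G := G) (F := ∅) (X := ∅) e₀
      (F₁ := {e₀}) (X₁ := ∅) (F₂ := ∅) (X₂ := {e₀})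
      (fun C hC he => ⟨hC.1, Finset.singleton_subset_iff.mpr he, hC.2.2⟩)
      (fun C hC he => ⟨hC.1, hC.2.1, Finset.disjoint_singleton_right.mpr he⟩)
    have hcard : (EF G \ ({e₀} ∪ (∅ : Finset (Sym2 V)))).card ≤ (EF G).card - 1 := by
      rw [Finset.union_empty]
      rw [Finset.card_sdiff_of_subset (Finset.singleton_subset_iff.mpr he₀)]
      simp
    have hcard' : (EF G \ ((∅ : Finset (Sym2 V)) ∪ {e₀})).card ≤ (EF G).card - 1 := by
      rw [Finset.empty_union]
      rw [Finset.card_sdiff_of_subset (Finset.singleton_subset_iff.mpr he₀)]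
      simp
    have hb1 := main_ind hdeg ((EF G).card - 1) {e₀} ∅
      (by simp) (Finset.singleton_subset_iff.mpr he₀) (by simp) hcard
    have hb2 := main_ind hdeg ((EF G).card - 1) ∅ {e₀}
      (by simp) (by simp) (Finset.singleton_subset_iff.mpr he₀) hcard'
    have hmono := B_mono (Nat.sub_le (EF G).card 1)
    calc (NC G ∅ ∅ : ℝ) ≤ ((NC G {e₀} ∅ + NC G ∅ {e₀} : ℕ) : ℝ) := by exact_mod_cast hbr
      _ = (NC G {e₀} ∅ : ℝ) + (NC G ∅ {e₀} : ℝ) := by push_cast; ring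
      _ ≤ B ((EF G).card - 1) + B ((EF G).card - 1) := add_le_add hb1 hb2
      _ ≤ B (EF G).card + B (EF G).card := add_le_add hmono hmono
      _ = 2 * B (EF G).card := by ring

end HamAux

/-- There is a constant `c` such that every simple graph on `n` vertices with maximum degree 3
has at most `c · 2^(3n/8)` Hamiltonian cycles. -/
theorem stmt_5 :
    ∃ c : ℝ, ∀ (n : ℕ) (G : SimpleGraph (Fin n)),
      (∀ v, (G.neighborSet v).ncard ≤ 3) →
      ({C : Set (Sym2 (Fin n)) | IsHamCycleSet G C}.ncard : ℝ)
        ≤ c * 2 ^ ((3 * n : ℝ) / 8) := by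
  classical
  refine ⟨2, fun n G hdeg => ?_⟩
  -- translate the set of Hamiltonian cycle edge sets to the Finset count
  have himg : {C : Set (Sym2 (Fin n)) | IsHamCycleSet G C}
      = (fun (s : Finset (Sym2 (Fin n))) => (↑s : Set (Sym2 (Fin n)))) ''
        {C : Finset (Sym2 (Fin n)) | HamAux.Ok G ∅ ∅ C} := by
    ext C
    simp only [Set.mem_image, Set.mem_setOf_eq]
    constructor
    · rintro ⟨v, p, hp, rfl⟩
      refine ⟨p.edges.toFinset, ⟨⟨v, p, hp, by ext e; simp⟩, by simp, by simp⟩, by ext e; simp⟩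
    · rintro ⟨Cf, hCf, rfl⟩
      exact hCf.1
  have hLHS : {C : Set (Sym2 (Fin n)) | IsHamCycleSet G C}.ncard = HamAux.NC G ∅ ∅ := by
    rw [himg, Set.ncard_image_of_injective _ (fun A B h => Finset.coe_injective h)]
    rfl
  rw [hLHS]
  -- edge count bound : 2|E| ≤ 3n
  haveI : DecidableRel G.Adj := Classical.decRel _
  have hEFeq : HamAux.EF G = G.edgeFinset := by
    ext e
    rw [HamAux.mem_EF, SimpleGraph.mem_edgeFinset]
  have hdegv : ∀ v, G.degree v ≤ 3 := by
    intro v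
    have : G.degree v = (G.neighborSet v).ncard := by
      rw [SimpleGraph.degree, Set.ncard_eq_toFinset_card']
      congr 1
    rw [this]
    exact hdeg v
  have hsum := SimpleGraph.sum_degrees_eq_twice_card_edges G
  have hsum3 : ∑ v : Fin n, G.degree v ≤ 3 * n := by
    calc ∑ v : Fin n, G.degree v ≤ ∑ _v : Fin n, 3 :=
        Finset.sum_le_sum (fun v _ => hdegv v)
      _ = 3 * n := by simp [Finset.sum_const, Finset.card_univ, mul_comm]
  have hEcard : 2 * (HamAux.EF G).card ≤ 3 * n := by
    rw [hEFeq]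
    omega
  -- assemble
  have hroot := HamAux.root_bound (G := G) hdeg
  have hBle : HamAux.B (HamAux.EF G).card ≤ 2 ^ ((3 * n : ℝ) / 8) := by
    rw [HamAux.B]
    apply Real.rpow_le_rpow_of_exponent_le (by norm_num)
    have hc : ((2 * (HamAux.EF G).card : ℕ) : ℝ) ≤ ((3 * n : ℕ) : ℝ) := Nat.cast_le.mpr hEcard
    push_cast at hc
    linarith
  calc (HamAux.NC G ∅ ∅ : ℝ) ≤ 2 * HamAux.B (HamAux.EF G).card := hroot
    _ ≤ 2 * 2 ^ ((3 * n : ℝ) / 8) := by linarith [hBle]
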